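/- arXiv:1703.10567 — 4 statements merged into one kernel-verified Lean document; each statement's English description precedes it below -/
import Mathlib

section
/- Let N ≥ 3, β < N-2, b ≥ 0, m > 0, and μ(x) = |x|^{-β} e^{-b|x|^m}. Then for x ≠ 0, U_μ(x) = (c_0(N) - c_0(N-β))/|x|^2 - (1/4)b^2 m^2 |x|^{2m-2} + (1/2)bm(N+m-2-β)|x|^{m-2}, where c_0(s) = ((s-2)/2)^2. -/
open MeasureTheory Metric Filter Set

noncomputable section

/-- The Laplacian of a scalar function on Euclidean space. -/
def lap {N : ℕ} (f : EuclideanSpace ℝ (Fin N) → ℝ) (x : EuclideanSpace ℝ (Fin N)) : ℝ :=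
  ∑ i, fderiv ℝ (fun y => fderiv ℝ f y (EuclideanSpace.single i 1)) x (EuclideanSpace.single i 1)

/-- The Schrödinger potential `U_μ = (1/4)|∇μ/μ|² - (1/2)Δμ/μ`. -/
def Umu {N : ℕ} (μ : EuclideanSpace ℝ (Fin N) → ℝ) (x : EuclideanSpace ℝ (Fin N)) : ℝ :=
  (1 / 4) * ‖gradient μ x‖ ^ 2 / μ x ^ 2 - (1 / 2) * lap μ x / μ x

noncomputable def fw (β b m : ℝ) : ℝ → ℝ := fun t => t ^ (-β/2) * Real.exp (-b * t ^ (m/2))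
noncomputable def ph (β b m : ℝ) : ℝ → ℝ := fun t => (-β/2) * t⁻¹ - b*(m/2) * t^(m/2-1)
noncomputable def ph' (β b m : ℝ) : ℝ → ℝ := fun t => (β/2) * (t⁻¹*t⁻¹) - b*(m/2)*(m/2-1)*t^(m/2-2)

theorem hfw (β b m t : ℝ) (ht : 0 < t) :
    HasDerivAt (fw β b m) (fw β b m t * ph β b m t) t := by
  have h1 : HasDerivAt (fun t : ℝ => t ^ (-β/2)) ((-β/2) * t ^ (-β/2-1)) t :=
    Real.hasDerivAt_rpow_const (Or.inl ht.ne')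
  have h2 : HasDerivAt (fun t : ℝ => Real.exp (-b * t ^ (m/2)))
      (Real.exp (-b * t ^ (m/2)) * (-b * ((m/2) * t ^ (m/2-1)))) t := by
    have := ((Real.hasDerivAt_rpow_const (p := m/2) (Or.inl ht.ne')).const_mul (-b)).exp
    simpa [mul_comm, mul_assoc, mul_left_comm] using this
  have : HasDerivAt (fw β b m) _ t := h1.mul h2
  convert this using 1
  have e1 : t ^ (-β/2-1) = t ^ (-β/2) * t⁻¹ := by
    rw [Real.rpow_sub ht, Real.rpow_one]; ring
  rw [e1]; unfold fw ph; ring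

theorem hph (β b m t : ℝ) (ht : 0 < t) :
    HasDerivAt (ph β b m) (ph' β b m t) t := by
  have h1 : HasDerivAt (fun t : ℝ => (-β/2) * t⁻¹) ((-β/2) * (-(t^2)⁻¹)) t :=
    (hasDerivAt_inv ht.ne').const_mul _
  have h2 : HasDerivAt (fun t : ℝ => b*(m/2) * t^(m/2-1)) (b*(m/2) * ((m/2-1) * t^(m/2-1-1))) t :=
    (Real.hasDerivAt_rpow_const (p := m/2-1) (Or.inl ht.ne')).const_mul _
  have : HasDerivAt (ph β b m) _ t := h1.sub h2
  convert this using 1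
  have e : (m/2-1-1) = (m/2-2) := by ring
  unfold ph'; rw [e, sq, mul_inv]; ring

theorem hfw1 (β b m t : ℝ) (ht : 0 < t) :
    HasDerivAt (fun t => fw β b m t * ph β b m t)
      (fw β b m t * (ph β b m t ^ 2 + ph' β b m t)) t := by
  have : HasDerivAt (fun t => fw β b m t * ph β b m t) _ t := (hfw β b m t ht).mul (hph β b m t ht)
  convert this using 1; ring

theorem hgradE {N : ℕ} (β b m : ℝ) (y : EuclideanSpace ℝ (Fin N)) (hy : y ≠ 0) :
    HasFDerivAt (fun y : EuclideanSpace ℝ (Fin N) => fw β b m (‖y‖^2))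
      ((fw β b m (‖y‖^2) * ph β b m (‖y‖^2)) • ((2:ℕ) • (innerSL ℝ y))) y := by
  have hty : 0 < ‖y‖^2 := by
    have := norm_pos_iff.mpr hy; positivity
  exact (hfw β b m _ hty).comp_hasFDerivAt y ((hasStrictFDerivAt_norm_sq y).hasFDerivAt)

theorem hgradG {N : ℕ} (β b m : ℝ) (x : EuclideanSpace ℝ (Fin N)) (hx : x ≠ 0) :
    HasGradientAt (fun y : EuclideanSpace ℝ (Fin N) => fw β b m (‖y‖^2))
      ((2 * (fw β b m (‖x‖^2) * ph β b m (‖x‖^2))) • x) x := by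
  rw [hasGradientAt_iff_hasFDerivAt]
  refine (hgradE β b m x hx).congr_fderiv ?_
  ext w
  simp [two_smul, real_inner_smul_left]
  ring

theorem hlapG {N : ℕ} (β b m : ℝ) (x : EuclideanSpace ℝ (Fin N)) (hx : x ≠ 0) :
    lap (fun y : EuclideanSpace ℝ (Fin N) => fw β b m (‖y‖^2)) x
      = 2*N*(fw β b m (‖x‖^2) * ph β b m (‖x‖^2))
        + 4*‖x‖^2*(fw β b m (‖x‖^2) * (ph β b m (‖x‖^2)^2 + ph' β b m (‖x‖^2))) := by
  have hr : 0 < ‖x‖ := norm_pos_iff.mpr hx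
  have ht : 0 < ‖x‖^2 := by positivity
  unfold lap
  have key : ∀ i : Fin N,
      fderiv ℝ (fun y => fderiv ℝ (fun y : EuclideanSpace ℝ (Fin N) => fw β b m (‖y‖^2)) y
          (EuclideanSpace.single i 1)) x (EuclideanSpace.single i 1)
      = (fw β b m (‖x‖^2) * (ph β b m (‖x‖^2)^2 + ph' β b m (‖x‖^2))) * (2*x i)*(2*x i)
        + (fw β b m (‖x‖^2) * ph β b m (‖x‖^2))*2 := by
    intro i
    have hev : (fun y => fderiv ℝ (fun y : EuclideanSpace ℝ (Fin N) => fw β b m (‖y‖^2)) y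
          (EuclideanSpace.single i 1))
        =ᶠ[nhds x] fun y => (fw β b m (‖y‖^2) * ph β b m (‖y‖^2)) *
          (2 * (innerSL ℝ (EuclideanSpace.single i (1:ℝ)) y)) := by
      filter_upwards [isOpen_ne.mem_nhds hx] with y hy
      rw [(hgradE β b m y hy).fderiv]
      simp [two_smul, real_inner_comm]
      ring
    rw [hev.fderiv_eq]
    -- product rule
    have hF : HasFDerivAt (fun y : EuclideanSpace ℝ (Fin N) => fw β b m (‖y‖^2) * ph β b m (‖y‖^2))
        ((fw β b m (‖x‖^2) * (ph β b m (‖x‖^2)^2 + ph' β b m (‖x‖^2))) • ((2:ℕ) • (innerSL ℝ x))) x :=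
      (hfw1 β b m _ ht).comp_hasFDerivAt (h₂ := fun t => fw β b m t * ph β b m t) x ((hasStrictFDerivAt_norm_sq x).hasFDerivAt)
    have hG : HasFDerivAt (fun y : EuclideanSpace ℝ (Fin N) =>
          (2:ℝ) * (innerSL ℝ (EuclideanSpace.single i (1:ℝ)) y))
        ((2:ℝ) • (innerSL ℝ (EuclideanSpace.single i (1:ℝ)))) x :=
      (innerSL ℝ (EuclideanSpace.single i (1:ℝ))).hasFDerivAt.const_mul 2
    rw [(hF.mul hG : HasFDerivAt (fun y => _ * _) _ x).fderiv]
    simp [two_smul, real_inner_comm, real_inner_smul_left, EuclideanSpace.inner_single_right]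
    ring
  rw [Finset.sum_congr rfl (fun i _ => key i)]
  rw [Finset.sum_add_distrib, Finset.sum_const, Finset.card_univ]
  have hsum : ∑ i : Fin N, (fw β b m (‖x‖^2) * (ph β b m (‖x‖^2)^2 + ph' β b m (‖x‖^2))) * (2*x i)*(2*x i)
      = 4*‖x‖^2*(fw β b m (‖x‖^2) * (ph β b m (‖x‖^2)^2 + ph' β b m (‖x‖^2))) := by
    have hn : ‖x‖^2 = ∑ i, x i ^ 2 := by
      rw [EuclideanSpace.norm_eq, Real.sq_sqrt (by positivity)]
      simp [Real.norm_eq_abs, sq_abs]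
    have step : ∀ i : Fin N, (fw β b m (‖x‖^2) * (ph β b m (‖x‖^2)^2 + ph' β b m (‖x‖^2))) * (2*x i)*(2*x i)
        = x i^2 * (4*(fw β b m (‖x‖^2) * (ph β b m (‖x‖^2)^2 + ph' β b m (‖x‖^2)))) := fun i => by ring
    rw [Finset.sum_congr rfl (fun i _ => step i), ← Finset.sum_mul, ← hn]
    ring
  rw [hsum]
  simp
  ring


/-- For `μ(x) = |x|^{-β} exp(-b|x|^m)` one has
`U_μ(x) = (c₀(N) - c₀(N-β))/|x|² - (1/4)b²m²|x|^{2m-2} + (1/2)bm(N+m-2-β)|x|^{m-2}`,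
where `c₀(s) = ((s-2)/2)²`. -/
theorem Umu_power_exp_weight (N : ℕ) (hN : 3 ≤ N) (β b m : ℝ)
    (hβ : β < (N : ℝ) - 2) (hb : 0 ≤ b) (hm : 0 < m) :
    ∀ x : EuclideanSpace ℝ (Fin N), x ≠ 0 →
      Umu (fun y => ‖y‖ ^ (-β) * Real.exp (-b * ‖y‖ ^ m)) x =
        ((((N : ℝ) - 2) / 2) ^ 2 - (((N : ℝ) - β - 2) / 2) ^ 2) / ‖x‖ ^ 2
          - (1 / 4) * b ^ 2 * m ^ 2 * ‖x‖ ^ (2 * m - 2)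
          + (1 / 2) * b * m * ((N : ℝ) + m - 2 - β) * ‖x‖ ^ (m - 2) := by
  intro x hx
  have hr : 0 < ‖x‖ := norm_pos_iff.mpr hx
  have ht : 0 < ‖x‖^2 := by positivity
  have hfun : (fun y : EuclideanSpace ℝ (Fin N) => ‖y‖ ^ (-β) * Real.exp (-b * ‖y‖ ^ m))
      = fun y => fw β b m (‖y‖^2) := by
    funext y; unfold fw
    rw [← Real.rpow_natCast ‖y‖ 2, ← Real.rpow_mul (norm_nonneg y), ← Real.rpow_mul (norm_nonneg y)]
    norm_num; ring_nf
  rw [hfun]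
  unfold Umu
  rw [(hgradG β b m x hx).gradient, hlapG β b m x hx]
  have hf0 : 0 < fw β b m (‖x‖^2) := mul_pos (Real.rpow_pos_of_pos ht _) (Real.exp_pos _)
  have hnorm : ‖(2 * (fw β b m (‖x‖^2) * ph β b m (‖x‖^2))) • x‖^2
      = (2 * (fw β b m (‖x‖^2) * ph β b m (‖x‖^2)))^2 * ‖x‖^2 := by
    rw [norm_smul, mul_pow, Real.norm_eq_abs, sq_abs]
  rw [hnorm]
  have key : (1/4)*((2*(fw β b m (‖x‖^2) * ph β b m (‖x‖^2)))^2 * ‖x‖^2)/(fw β b m (‖x‖^2))^2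
      - (1/2)*(2*N*(fw β b m (‖x‖^2)*ph β b m (‖x‖^2))
          + 4*‖x‖^2*(fw β b m (‖x‖^2)*(ph β b m (‖x‖^2)^2 + ph' β b m (‖x‖^2))))/(fw β b m (‖x‖^2))
      = ‖x‖^2*ph β b m (‖x‖^2)^2 - N*ph β b m (‖x‖^2)
        - 2*‖x‖^2*(ph β b m (‖x‖^2)^2 + ph' β b m (‖x‖^2)) := by
    field_simp
    ring
  rw [show (fun y : EuclideanSpace ℝ (Fin N) => fw β b m (‖y‖^2)) x = fw β b m (‖x‖^2) from rfl]
  rw [key]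
  -- now pure algebra with rpow
  unfold ph ph'
  have e1 : (‖x‖^2 : ℝ) ^ (m/2-1) = ‖x‖ ^ (m-2) := by
    rw [← Real.rpow_natCast ‖x‖ 2, ← Real.rpow_mul hr.le, show ((2:ℕ):ℝ) * (m/2-1) = m-2 by push_cast; ring]
  have e2 : (‖x‖^2 : ℝ) ^ (m/2-2) = ‖x‖ ^ (m-2) * (‖x‖^2)⁻¹ := by
    rw [← Real.rpow_natCast ‖x‖ 2, ← Real.rpow_mul hr.le, ← Real.rpow_neg hr.le,
      ← Real.rpow_add hr, show (m-2) + -((2:ℕ):ℝ) = ((2:ℕ):ℝ) * (m/2-2) by push_cast; ring]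
  have e3 : ‖x‖ ^ (2*m-2) = ‖x‖^(m-2) * ‖x‖^(m-2) * ‖x‖^2 := by
    rw [← Real.rpow_natCast ‖x‖ 2, ← Real.rpow_add hr, ← Real.rpow_add hr,
      show (m-2) + (m-2) + ((2:ℕ):ℝ) = 2*m-2 by push_cast; ring]
  rw [e1, e2, e3]
  have h2 : (‖x‖:ℝ) ≠ 0 := hr.ne'
  field_simp
  ring
end
end

section
/- Let dμ = μ(x)dx be a positive measure on ℝ^N and suppose c > 0 and γ ∈ ℝ satisfy γ^2 < c, |x|^{2γ} 1_{B_2} ∈ L^1(dμ), and ∫_{B_1 \ B_{1/n}} |x|^{2γ-2} dμ → ∞ as n → ∞. Then the bottom of the spectrum λ_1 = inf over nonzero φ ∈ H^1_μ of (∫(|∇φ|^2 - c φ^2/|x|^2)dμ)/(∫ φ^2 dμ) equals -∞; i.e., there is no constant C with c ∫ φ^2/|x|^2 dμ ≤ ∫ |∇φ|^2 dμ + C ∫ φ^2 dμ for all φ ∈ H^1_μ. -/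
open MeasureTheory Metric Filter Set

noncomputable section

lemma grad_rpow_bound {N : ℕ} (γ : ℝ) (x : EuclideanSpace ℝ (Fin N)) (hx : x ≠ 0) :
    DifferentiableAt ℝ (fun y : EuclideanSpace ℝ (Fin N) => ‖y‖ ^ γ) x ∧
    ‖gradient (fun y : EuclideanSpace ℝ (Fin N) => ‖y‖ ^ γ) x‖ ≤ |γ| * ‖x‖ ^ (γ - 1) := by
  have hx0 : ‖x‖ ≠ 0 := norm_ne_zero_iff.2 hx
  have hd : DifferentiableAt ℝ (fun y : EuclideanSpace ℝ (Fin N) => ‖y‖) x :=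
    differentiableAt_id.norm ℝ hx
  have hF := hd.hasFDerivAt
  have hg : HasDerivAt (fun t : ℝ => t ^ γ) (γ * ‖x‖ ^ (γ - 1)) ‖x‖ :=
    Real.hasDerivAt_rpow_const (Or.inl hx0)
  have hcomp : HasFDerivAt (fun y : EuclideanSpace ℝ (Fin N) => ‖y‖ ^ γ)
      ((γ * ‖x‖ ^ (γ - 1)) • fderiv ℝ (fun y : EuclideanSpace ℝ (Fin N) => ‖y‖) x) x :=
    hg.comp_hasFDerivAt x hF
  refine ⟨hcomp.differentiableAt, ?_⟩
  have h1 : ‖fderiv ℝ (fun y : EuclideanSpace ℝ (Fin N) => ‖y‖) x‖ ≤ 1 := by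
    simpa using hF.le_of_lipschitz lipschitzWith_one_norm
  calc ‖gradient (fun y : EuclideanSpace ℝ (Fin N) => ‖y‖ ^ γ) x‖
      = ‖fderiv ℝ (fun y : EuclideanSpace ℝ (Fin N) => ‖y‖ ^ γ) x‖ := by
        rw [gradient]; exact LinearIsometryEquiv.norm_map _ _
    _ ≤ |γ| * ‖x‖ ^ (γ - 1) := by
        rw [hcomp.fderiv, norm_smul]
        have habs : |γ * ‖x‖ ^ (γ - 1)| = |γ| * ‖x‖ ^ (γ - 1) := by
          rw [abs_mul, abs_of_nonneg (Real.rpow_nonneg (norm_nonneg x) _)]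
        rw [Real.norm_eq_abs, habs]
        nlinarith [abs_nonneg γ, Real.rpow_nonneg (norm_nonneg x) (γ - 1),
          mul_nonneg (abs_nonneg γ) (Real.rpow_nonneg (norm_nonneg x) (γ - 1)), h1,
          norm_nonneg (fderiv ℝ (fun y : EuclideanSpace ℝ (Fin N) => ‖y‖) x)]


set_option maxHeartbeats 1000000 in
/-- If `γ² < c`, `|x|^{2γ} ∈ L¹(B₂, dμ)` and `∫_{B₁ \ B_{1/n}} |x|^{2γ-2} dμ → ∞`,
then the bottom of the spectrum of `-(L + c/|x|²)` is `-∞`: no weighted Hardy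
inequality with constant `c` can hold. -/
theorem bottom_of_spectrum_neg_infty (N : ℕ) (hN : 1 ≤ N)
    (μ : EuclideanSpace ℝ (Fin N) → ℝ) (hμ : ∀ x, 0 ≤ μ x)
    (c γ : ℝ) (hc : 0 < c) (hγc : γ ^ 2 < c)
    (hint : IntegrableOn (fun x => ‖x‖ ^ (2 * γ) * μ x)
      (ball (0 : EuclideanSpace ℝ (Fin N)) 2))
    (hdiv : Tendsto (fun n : ℕ =>
        ∫ x in ball (0 : EuclideanSpace ℝ (Fin N)) 1 \ ball 0 (1 / n),
          ‖x‖ ^ (2 * γ - 2) * μ x) atTop atTop) :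
    ∀ C : ℝ, ∃ φ : EuclideanSpace ℝ (Fin N) → ℝ,
      (∀ᵐ x : EuclideanSpace ℝ (Fin N), DifferentiableAt ℝ φ x) ∧
      Integrable (fun x => φ x ^ 2 * μ x) ∧
      Integrable (fun x => ‖gradient φ x‖ ^ 2 * μ x) ∧
      Integrable (fun x => φ x ^ 2 / ‖x‖ ^ 2 * μ x) ∧
      0 < ∫ x, φ x ^ 2 * μ x ∧
      (∫ x, ‖gradient φ x‖ ^ 2 * μ x) - c * (∫ x, φ x ^ 2 / ‖x‖ ^ 2 * μ x) <
        C * ∫ x, φ x ^ 2 * μ x := by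
  classical
  intro C
  haveI : Nonempty (Fin N) := ⟨⟨0, hN⟩⟩
  haveI : Nontrivial (EuclideanSpace ℝ (Fin N)) := inferInstance
  set g : EuclideanSpace ℝ (Fin N) → ℝ := fun x => ‖x‖ ^ (2 * γ) * μ x with hg_def
  have hg0 : ∀ x, 0 ≤ g x := fun x => mul_nonneg (Real.rpow_nonneg (norm_nonneg x) _) (hμ x)
  set M : ℝ := ∫ x in ball (0 : EuclideanSpace ℝ (Fin N)) 2, g x with hM_def
  have hM0 : 0 ≤ M := setIntegral_nonneg measurableSet_ball fun x _ => hg0 x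
  have hγc' : γ ^ 2 - c < 0 := by linarith
  set T : ℝ := max 1 (C * M / (γ ^ 2 - c) + 1) with hT_def
  obtain ⟨n, hnT, hn1⟩ := ((hdiv.eventually_ge_atTop T).and (eventually_ge_atTop 1)).exists
  have hκ : (1 : ℝ) ≤ n := by exact_mod_cast hn1
  have hκ0 : (0 : ℝ) < n := by linarith
  set r : ℝ := 1 / (n : ℝ) with hr_def
  have hr0 : 0 < r := by positivity
  set p : EuclideanSpace ℝ (Fin N) → ℝ := fun x => ‖x‖ ^ (2 * γ - 2) * μ x with hp_def
  have hp0 : ∀ x, 0 ≤ p x := fun x => mul_nonneg (Real.rpow_nonneg (norm_nonneg x) _) (hμ x)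
  set A : Set (EuclideanSpace ℝ (Fin N)) := ball 0 1 \ closedBall 0 r with hA_def
  have hAopen : IsOpen A := isOpen_ball.sdiff isClosed_closedBall
  have hAmeas : MeasurableSet A := hAopen.measurableSet
  have hmemA : ∀ x ∈ A, r < ‖x‖ ∧ ‖x‖ < 1 := by
    intro x hx
    obtain ⟨h1, h2⟩ := hx
    rw [mem_ball_zero_iff] at h1
    rw [mem_closedBall_zero_iff] at h2
    exact ⟨not_le.1 h2, h1⟩
  have hnotA : ∀ x, ‖x‖ < r ∨ 1 < ‖x‖ → x ∉ A := by
    intro x h hxA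
    rcases h with h | h
    · exact absurd (hmemA x hxA).1 (not_lt.2 h.le)
    · exact absurd (hmemA x hxA).2 (not_lt.2 h.le)
  have hA2 : A ⊆ ball (0 : EuclideanSpace ℝ (Fin N)) 2 := by
    intro x hx
    have := (hmemA x hx).2
    rw [mem_ball_zero_iff]
    linarith
  set φ : EuclideanSpace ℝ (Fin N) → ℝ := fun x => if x ∈ A then ‖x‖ ^ γ else 0 with hφ_def
  -- pointwise identities
  have hxpos : ∀ x ∈ A, (0 : ℝ) < ‖x‖ := fun x hx => hr0.trans (hmemA x hx).1
  have hsq_rpow : ∀ x ∈ A, (‖x‖ ^ γ) ^ 2 = ‖x‖ ^ (2 * γ) := by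
    intro x hx
    rw [← Real.rpow_natCast (‖x‖ ^ γ) 2, ← Real.rpow_mul (norm_nonneg x)]
    norm_num [mul_comm]
  have hφ_sq : ∀ x, φ x ^ 2 * μ x = A.indicator g x := by
    intro x
    by_cases hx : x ∈ A
    · simp only [hφ_def, if_pos hx, indicator_of_mem hx, hg_def, hsq_rpow x hx]
    · simp [hφ_def, if_neg hx, indicator_of_notMem hx]
  have hφ_pot : ∀ x, φ x ^ 2 / ‖x‖ ^ 2 * μ x = A.indicator p x := by
    intro x
    by_cases hx : x ∈ A
    · have hx0 := hxpos x hx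
      simp only [hφ_def, if_pos hx, indicator_of_mem hx, hp_def]
      congr 1
      rw [hsq_rpow x hx, ← Real.rpow_natCast ‖x‖ 2, ← Real.rpow_sub hx0]
      norm_num
    · simp [hφ_def, if_neg hx, indicator_of_notMem hx]
  -- behavior off A
  have hout : ∀ x, ‖x‖ < r ∨ 1 < ‖x‖ → φ =ᶠ[nhds x] fun _ => (0 : ℝ) := by
    intro x hx
    rcases hx with hx | hx
    · have hU : ball (0 : EuclideanSpace ℝ (Fin N)) r ∈ nhds x :=
        isOpen_ball.mem_nhds (mem_ball_zero_iff.2 hx)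
      filter_upwards [hU] with y hy
      exact if_neg (hnotA y (Or.inl (mem_ball_zero_iff.1 hy)))
    · have hU : (closedBall (0 : EuclideanSpace ℝ (Fin N)) 1)ᶜ ∈ nhds x := by
        refine isClosed_closedBall.isOpen_compl.mem_nhds ?_
        simpa only [mem_compl_iff, mem_closedBall_zero_iff, not_le] using hx
      filter_upwards [hU] with y hy
      refine if_neg (hnotA y (Or.inr ?_))
      simpa only [mem_compl_iff, mem_closedBall_zero_iff, not_le] using hy
  have hgrad_out : ∀ x, ‖x‖ < r ∨ 1 < ‖x‖ →
      gradient φ x = 0 ∧ DifferentiableAt ℝ φ x := by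
    intro x hx
    have h := hout x hx
    constructor
    · rw [gradient, h.fderiv_eq, fderiv_const_apply]
      simp
    · exact (differentiableAt_const (0 : ℝ)).congr_of_eventuallyEq h
  have hin : ∀ x ∈ A, φ =ᶠ[nhds x] fun y => ‖y‖ ^ γ := by
    intro x hx
    filter_upwards [hAopen.mem_nhds hx] with y hy
    exact if_pos hy
  have hgrad_in : ∀ x ∈ A, DifferentiableAt ℝ φ x ∧
      ‖gradient φ x‖ ≤ |γ| * ‖x‖ ^ (γ - 1) := by
    intro x hx
    have hx0 : x ≠ 0 := by
      intro h
      rw [h] at hx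
      have := (hmemA 0 hx).1
      simp at this
      linarith
    obtain ⟨hdiff, hbound⟩ := grad_rpow_bound γ x hx0
    have h := hin x hx
    refine ⟨hdiff.congr_of_eventuallyEq h, ?_⟩
    rw [gradient, h.fderiv_eq]
    rw [gradient] at hbound
    exact hbound
  -- null set of spheres
  have hsph : volume (sphere (0 : EuclideanSpace ℝ (Fin N)) r ∪ sphere 0 1) = 0 :=
    measure_union_null (Measure.addHaar_sphere _ _ _) (Measure.addHaar_sphere _ _ _)
  have hcases : ∀ x ∉ sphere (0 : EuclideanSpace ℝ (Fin N)) r ∪ sphere 0 1,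
      x ∈ A ∨ (‖x‖ < r ∨ 1 < ‖x‖) := by
    intro x hx
    simp only [mem_union, mem_sphere_zero_iff_norm, not_or] at hx
    rcases lt_trichotomy ‖x‖ r with h | h | h
    · exact Or.inr (Or.inl h)
    · exact absurd h hx.1
    · rcases lt_trichotomy ‖x‖ 1 with h' | h' | h'
      · exact Or.inl ⟨mem_ball_zero_iff.2 h', by rw [mem_closedBall_zero_iff]; exact not_le.2 h⟩
      · exact absurd h' hx.2
      · exact Or.inr (Or.inr h')
  have hZae : ∀ᵐ x : EuclideanSpace ℝ (Fin N),
      x ∉ sphere (0 : EuclideanSpace ℝ (Fin N)) r ∪ sphere 0 1 := by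
    rw [ae_iff]
    simpa only [not_not, ofPred_mem_eq] using hsph
  have hdiff_ae : ∀ᵐ x : EuclideanSpace ℝ (Fin N), DifferentiableAt ℝ φ x := by
    filter_upwards [hZae] with x hx
    rcases hcases x hx with h | h
    · exact (hgrad_in x h).1
    · exact (hgrad_out x h).2
  have hfg_ae : (fun x => ‖gradient φ x‖ ^ 2 * μ x) =ᵐ[volume]
      A.indicator (fun x => ‖gradient φ x‖ ^ 2 * μ x) := by
    filter_upwards [hZae] with x hx
    rcases hcases x hx with h | h
    · rw [indicator_of_mem h]
    · rw [indicator_of_notMem (hnotA x h), (hgrad_out x h).1]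
      simp
  -- measurability
  have hgmeas : AEStronglyMeasurable g (volume.restrict (ball (0 : EuclideanSpace ℝ (Fin N)) 2)) :=
    hint.aestronglyMeasurable
  have hzero_null : volume ({0} : Set (EuclideanSpace ℝ (Fin N))) = 0 := measure_singleton 0
  have hμmeas : AEStronglyMeasurable μ (volume.restrict (ball (0 : EuclideanSpace ℝ (Fin N)) 2)) := by
    have hmul : AEStronglyMeasurable (fun x => g x * ‖x‖ ^ (-(2 * γ)))
        (volume.restrict (ball (0 : EuclideanSpace ℝ (Fin N)) 2)) :=
      hgmeas.mul (measurable_norm.pow measurable_const).aestronglyMeasurable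
    refine hmul.congr ?_
    have h0 : ∀ᵐ x : EuclideanSpace ℝ (Fin N)
        ∂volume.restrict (ball (0 : EuclideanSpace ℝ (Fin N)) 2), x ≠ 0 := by
      refine ae_restrict_of_ae ?_
      rw [ae_iff]
      simpa only [not_not, ofPred_eq_eq_singleton] using hzero_null
    filter_upwards [h0] with x hx
    have hx0 : (0 : ℝ) < ‖x‖ := norm_pos_iff.2 hx
    show g x * ‖x‖ ^ (-(2 * γ)) = μ x
    rw [hg_def]
    show ‖x‖ ^ (2 * γ) * μ x * ‖x‖ ^ (-(2 * γ)) = μ x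
    rw [mul_right_comm, ← Real.rpow_add hx0]
    simp
  have hμA : AEStronglyMeasurable μ (volume.restrict A) :=
    hμmeas.mono_measure (Measure.restrict_mono hA2 le_rfl)
  -- integrability on A
  have hgA : IntegrableOn g A := hint.mono_set hA2
  have hpmeasA : AEStronglyMeasurable p (volume.restrict A) :=
    (measurable_norm.pow measurable_const).aestronglyMeasurable.mul hμA
  have hple : ∀ x ∈ A, p x ≤ (n : ℝ) ^ 2 * g x := by
    intro x hx
    have hx0 := hxpos x hx
    have hrx := (hmemA x hx).1
    have key : ‖x‖ ^ (2 * γ - 2) ≤ (n : ℝ) ^ 2 * ‖x‖ ^ (2 * γ) := by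
      have h1 : ‖x‖ ^ (2 * γ) = ‖x‖ ^ (2 * γ - 2) * ‖x‖ ^ (2 : ℕ) := by
        rw [← Real.rpow_natCast ‖x‖ 2, ← Real.rpow_add hx0]
        norm_num
      have h2 : r ^ 2 ≤ ‖x‖ ^ (2 : ℕ) := by
        have := pow_le_pow_left₀ hr0.le hrx.le 2
        simpa using this
      have h3 : 0 ≤ ‖x‖ ^ (2 * γ - 2) := Real.rpow_nonneg (norm_nonneg x) _
      have h4 : r * (n : ℝ) = 1 := by
        rw [hr_def]; field_simp
      have h5 : ‖x‖ ^ (2 * γ - 2) * r ^ 2 ≤ ‖x‖ ^ (2 * γ - 2) * ‖x‖ ^ 2 :=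
        mul_le_mul_of_nonneg_left h2 h3
      calc ‖x‖ ^ (2 * γ - 2) = (n : ℝ) ^ 2 * (‖x‖ ^ (2 * γ - 2) * r ^ 2) := by
            have : (r * (n:ℝ)) ^ 2 = 1 := by rw [h4]; norm_num
            nlinarith [this]
        _ ≤ (n : ℝ) ^ 2 * (‖x‖ ^ (2 * γ - 2) * ‖x‖ ^ 2) :=
            mul_le_mul_of_nonneg_left h5 (sq_nonneg _)
        _ = (n : ℝ) ^ 2 * ‖x‖ ^ (2 * γ) := by rw [← h1]
    calc p x = ‖x‖ ^ (2 * γ - 2) * μ x := rfl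
      _ ≤ ((n : ℝ) ^ 2 * ‖x‖ ^ (2 * γ)) * μ x := mul_le_mul_of_nonneg_right key (hμ x)
      _ = (n : ℝ) ^ 2 * g x := by rw [hg_def, mul_assoc]
  have hpA : IntegrableOn p A := by
    refine Integrable.mono' (hgA.const_mul ((n : ℝ) ^ 2)) hpmeasA ?_
    rw [ae_restrict_iff' hAmeas]
    refine ae_of_all _ fun x hx => ?_
    rw [Real.norm_eq_abs, abs_of_nonneg (hp0 x)]
    exact hple x hx
  -- gradient integrand
  have hgradmeas : Measurable (gradient φ) :=
    (LinearIsometryEquiv.continuous _).measurable.comp (measurable_fderiv ℝ φ)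
  have hfgmeasA : AEStronglyMeasurable (fun x => ‖gradient φ x‖ ^ 2 * μ x) (volume.restrict A) :=
    ((hgradmeas.norm.pow measurable_const).aestronglyMeasurable).mul hμA
  have hfg_leA : ∀ x ∈ A, ‖gradient φ x‖ ^ 2 * μ x ≤ γ ^ 2 * p x := by
    intro x hx
    have hb := (hgrad_in x hx).2
    have h1 : ‖gradient φ x‖ ^ 2 ≤ (|γ| * ‖x‖ ^ (γ - 1)) ^ 2 :=
      pow_le_pow_left₀ (norm_nonneg _) hb 2
    have h2 : (|γ| * ‖x‖ ^ (γ - 1)) ^ 2 = γ ^ 2 * ‖x‖ ^ (2 * γ - 2) := by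
      rw [mul_pow, sq_abs]
      congr 1
      rw [← Real.rpow_natCast (‖x‖ ^ (γ - 1)) 2, ← Real.rpow_mul (norm_nonneg x)]
      norm_num
      ring_nf
    calc ‖gradient φ x‖ ^ 2 * μ x ≤ (γ ^ 2 * ‖x‖ ^ (2 * γ - 2)) * μ x :=
          mul_le_mul_of_nonneg_right (h2 ▸ h1) (hμ x)
      _ = γ ^ 2 * p x := by rw [hp_def, mul_assoc]
  have hfgA : IntegrableOn (fun x => ‖gradient φ x‖ ^ 2 * μ x) A := by
    refine Integrable.mono' (hpA.const_mul (γ ^ 2)) hfgmeasA ?_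
    rw [ae_restrict_iff' hAmeas]
    refine ae_of_all _ fun x hx => ?_
    rw [Real.norm_eq_abs, abs_of_nonneg (mul_nonneg (sq_nonneg _) (hμ x))]
    exact hfg_leA x hx
  have hfg_int : Integrable (fun x => ‖gradient φ x‖ ^ 2 * μ x) :=
    ((integrable_indicator_iff hAmeas).2 hfgA).congr hfg_ae.symm
  have hpot_int : Integrable (fun x => φ x ^ 2 / ‖x‖ ^ 2 * μ x) :=
    ((integrable_indicator_iff hAmeas).2 hpA).congr (ae_of_all _ fun x => (hφ_pot x).symm)
  have hsq_int : Integrable (fun x => φ x ^ 2 * μ x) :=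
    ((integrable_indicator_iff hAmeas).2 hgA).congr (ae_of_all _ fun x => (hφ_sq x).symm)
  -- integral values
  have hpot_val : ∫ x, φ x ^ 2 / ‖x‖ ^ 2 * μ x = ∫ x in A, p x := by
    rw [integral_congr_ae (ae_of_all _ hφ_pot), integral_indicator hAmeas]
  have hsq_val : ∫ x, φ x ^ 2 * μ x = ∫ x in A, g x := by
    rw [integral_congr_ae (ae_of_all _ hφ_sq), integral_indicator hAmeas]
  set I : ℝ := ∫ x in A, p x with hI_def
  have hI_eq : I = ∫ x in ball (0 : EuclideanSpace ℝ (Fin N)) 1 \ ball 0 r, p x := by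
    refine setIntegral_congr_set ?_
    rw [ae_eq_set]
    constructor
    · refine measure_mono_null ?_ (measure_empty)
      intro x hx
      exact hx.2 ⟨hx.1.1, fun hb => hx.1.2 (ball_subset_closedBall hb)⟩
    · refine measure_mono_null ?_ (Measure.addHaar_sphere volume 0 r)
      intro x hx
      have h1 : x ∈ ball (0 : EuclideanSpace ℝ (Fin N)) 1 := hx.1.1
      have h2 : x ∉ ball (0 : EuclideanSpace ℝ (Fin N)) r := hx.1.2
      have h3 : x ∈ closedBall (0 : EuclideanSpace ℝ (Fin N)) r := by
        by_contra h
        exact hx.2 ⟨h1, h⟩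
      rw [mem_sphere_zero_iff_norm]
      rw [mem_closedBall_zero_iff] at h3
      rw [mem_ball_zero_iff, not_lt] at h2
      linarith
  have hIT : T ≤ I := by rw [hI_eq]; exact hnT
  have hI1 : (1 : ℝ) ≤ I := le_trans (le_max_left _ _) hIT
  have hIg_le : I ≤ (n : ℝ) ^ 2 * ∫ x in A, g x := by
    have h := setIntegral_mono_on hpA (hgA.const_mul ((n : ℝ) ^ 2)) hAmeas hple
    rwa [integral_const_mul] at h
  have hden_pos : 0 < ∫ x in A, g x := by
    have hden0 : 0 ≤ ∫ x in A, g x := setIntegral_nonneg hAmeas fun x _ => hg0 x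
    rcases hden0.lt_or_eq with h | h
    · exact h
    · rw [← h, mul_zero] at hIg_le
      linarith
  have hden_le : (∫ x in A, g x) ≤ M := by
    refine setIntegral_mono_set hint (ae_of_all _ hg0) (HasSubset.Subset.eventuallyLE hA2)
  have hgrad_le : (∫ x, ‖gradient φ x‖ ^ 2 * μ x) ≤ γ ^ 2 * I := by
    calc (∫ x, ‖gradient φ x‖ ^ 2 * μ x) = ∫ x in A, ‖gradient φ x‖ ^ 2 * μ x := by
          rw [integral_congr_ae hfg_ae, integral_indicator hAmeas]
      _ ≤ ∫ x in A, γ ^ 2 * p x := setIntegral_mono_on hfgA (hpA.const_mul _) hAmeas hfg_leA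
      _ = γ ^ 2 * I := integral_const_mul _ _
  refine ⟨φ, hdiff_ae, hsq_int, hfg_int, hpot_int, ?_, ?_⟩
  · rw [hsq_val]; exact hden_pos
  · rw [hsq_val, hpot_val]
    have h2 : (γ ^ 2 - c) * I < C * ∫ x in A, g x := by
      rcases le_or_gt 0 C with hC | hC
      · have hneg : (γ ^ 2 - c) * I < 0 := mul_neg_of_neg_of_pos hγc' (by linarith)
        exact hneg.trans_le (mul_nonneg hC hden_pos.le)
      · have hCM : C * M ≤ C * ∫ x in A, g x := by nlinarith
        have hT2 : C * M / (γ ^ 2 - c) + 1 ≤ I := le_trans (le_max_right _ _) hIT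
        have h3 : (γ ^ 2 - c) * I ≤ (γ ^ 2 - c) * (C * M / (γ ^ 2 - c) + 1) := by nlinarith
        have heq : (γ ^ 2 - c) * (C * M / (γ ^ 2 - c) + 1) = C * M + (γ ^ 2 - c) := by
          rw [mul_add, mul_one, mul_comm (γ ^ 2 - c) _, div_mul_cancel₀ _ (ne_of_lt hγc')]
        linarith
    linarith
end
end

section
/- Let dμ be a positive measure on ℝ^N with density μ ∈ L^1_loc, and define N_0 = sup{δ ∈ ℝ : |x|^{-δ} ∈ L^1_loc(dμ)}. If c > c_0(N_0) = ((N_0-2)/2)^2, then the weighted Hardy inequality c ∫ φ^2/|x|^2 dμ ≤ ∫ |∇φ|^2 dμ + C ∫ φ^2 dμ fails for every constant C; i.e., inf_{φ ∈ H^1_μ \ {0}} (∫ |∇φ|^2 dμ - c∫ φ^2/|x|^2 dμ)/(∫ φ^2 dμ) = -∞. -/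
set_option maxHeartbeats 1000000


open MeasureTheory Metric Filter Set InnerProductSpace

noncomputable section

section GradientAux

variable {E : Type*} [NormedAddCommGroup E] [InnerProductSpace ℝ E] [CompleteSpace E]

lemma hasGradientAt_norm_rpow (p : ℝ) {x : E} (hx : x ≠ 0) :
    HasGradientAt (fun y : E => ‖y‖ ^ p) ((p * ‖x‖ ^ (p - 2)) • x) x := by
  have hn : (0:ℝ) < ‖x‖ := norm_pos_iff.mpr hx
  have hn2 : (0:ℝ) < ‖x‖ ^ 2 := by positivity
  have h1 : HasFDerivAt (fun y : E => ‖y‖ ^ 2) ((2:ℕ) • (innerSL ℝ x)) x :=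
    (hasStrictFDerivAt_norm_sq x).hasFDerivAt
  have h2 : HasDerivAt (fun t : ℝ => t ^ (p/2)) (p/2 * (‖x‖^2) ^ (p/2 - 1)) (‖x‖^2) :=
    Real.hasDerivAt_rpow_const (Or.inl hn2.ne')
  have h3 := h2.comp_hasFDerivAt x h1
  simp only [Function.comp_def] at h3
  have hfun : (fun y : E => ((‖y‖ ^ 2 : ℝ)) ^ (p/2)) = fun y : E => ‖y‖ ^ p := by
    funext y
    rw [← Real.rpow_natCast ‖y‖ 2, ← Real.rpow_mul (norm_nonneg y)]
    push_cast
    rw [show (2:ℝ) * (p/2) = p by ring]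
  rw [hfun] at h3
  have hpow : (‖x‖ ^ 2 : ℝ) ^ (p/2 - 1) = ‖x‖ ^ (p - 2) := by
    rw [← Real.rpow_natCast ‖x‖ 2, ← Real.rpow_mul (norm_nonneg x)]
    push_cast
    rw [show (2:ℝ) * (p/2 - 1) = p - 2 by ring]
  have hD : (toDual ℝ E) ((p * ‖x‖ ^ (p - 2)) • x)
      = (p/2 * (‖x‖^2) ^ (p/2 - 1)) • (2:ℕ) • (innerSL ℝ x) := by
    ext y
    simp only [toDual_apply_apply, ContinuousLinearMap.smul_apply, innerSL_apply_apply,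
      real_inner_smul_left, hpow, smul_eq_mul, nsmul_eq_mul]
    push_cast
    ring
  rw [hasGradientAt_iff_hasFDerivAt, hD]
  exact h3

lemma hasGradientAt_const_mul {f : E → ℝ} {v : E} {x : E} (k : ℝ)
    (h : HasGradientAt f v x) : HasGradientAt (fun y => k * f y) (k • v) x := by
  rw [hasGradientAt_iff_hasFDerivAt] at h ⊢
  simpa [_root_.map_smul] using h.const_mul k

lemma hasGradientAt_const_sub {f : E → ℝ} {v : E} {x : E} (k : ℝ)
    (h : HasGradientAt f v x) : HasGradientAt (fun y => k - f y) (-v) x := by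
  rw [hasGradientAt_iff_hasFDerivAt] at h ⊢
  simpa [_root_.map_neg] using h.const_sub k

end GradientAux

lemma rpow_sq_helper {b : ℝ} (hb : 0 < b) (e : ℝ) : (b ^ e)^2 = b^(2*e) := by
  rw [sq, ← Real.rpow_add hb, two_mul]

lemma sq_rpow_helper (b : ℝ) : b ^ (2:ℕ) = b ^ (2:ℝ) := by
  rw [← Real.rpow_natCast b 2]
  norm_num

/-- Optimality of the Hardy constant: if `N₀ = sup{δ : |x|^{-δ} ∈ L¹_loc(dμ)}` and
`c > c₀(N₀) = ((N₀-2)/2)²`, then the weighted Hardy inequality with constant `c`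
fails for every `C`; i.e. the Rayleigh quotient is unbounded below on `H¹_μ`. -/
theorem hardy_fails_above_optimal_constant (N : ℕ) (hN : 1 ≤ N)
    (μ : EuclideanSpace ℝ (Fin N) → ℝ) (hμ : ∀ x, 0 ≤ μ x)
    (hloc : ∀ K : Set (EuclideanSpace ℝ (Fin N)), IsCompact K → IntegrableOn μ K)
    (N₀ : ℝ)
    (hN₀ : IsLUB {δ : ℝ | ∀ K : Set (EuclideanSpace ℝ (Fin N)), IsCompact K →
      IntegrableOn (fun x => ‖x‖ ^ (-δ) * μ x) K} N₀)
    (c : ℝ) (hc : ((N₀ - 2) / 2) ^ 2 < c) :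
    ∀ C : ℝ, ∃ φ : EuclideanSpace ℝ (Fin N) → ℝ,
      (∀ᵐ x : EuclideanSpace ℝ (Fin N), DifferentiableAt ℝ φ x) ∧
      Integrable (fun x => φ x ^ 2 * μ x) ∧
      Integrable (fun x => ‖gradient φ x‖ ^ 2 * μ x) ∧
      Integrable (fun x => φ x ^ 2 / ‖x‖ ^ 2 * μ x) ∧
      0 < ∫ x, φ x ^ 2 * μ x ∧
      ¬ (c * (∫ x, φ x ^ 2 / ‖x‖ ^ 2 * μ x) ≤
          (∫ x, ‖gradient φ x‖ ^ 2 * μ x) + C * ∫ x, φ x ^ 2 * μ x) := by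
  classical
  intro C
  haveI : Nonempty (Fin N) := ⟨⟨0, hN⟩⟩
  have hc0 : (0:ℝ) < c := lt_of_le_of_lt (sq_nonneg _) hc
  -- spheres are null
  have hsph : ∀ r : ℝ, volume {x : EuclideanSpace ℝ (Fin N) | ‖x‖ = r} = 0 := by
    intro r
    have h := Measure.addHaar_sphere (μ := (volume : Measure (EuclideanSpace ℝ (Fin N)))) 0 r
    have : {x : EuclideanSpace ℝ (Fin N) | ‖x‖ = r} = sphere (0:EuclideanSpace ℝ (Fin N)) r := by
      ext x; simp [mem_sphere_zero_iff_norm]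
    rw [this]; exact h
  have hzero : volume ({(0:EuclideanSpace ℝ (Fin N))} : Set (EuclideanSpace ℝ (Fin N))) = 0 := by
    refine measure_mono_null ?_ (hsph 0)
    intro x hx; simp only [mem_singleton_iff] at hx; simp [hx]
  have hne : ∀ r : ℝ, ∀ᵐ x : EuclideanSpace ℝ (Fin N), ‖x‖ ≠ r := by
    intro r
    rw [ae_iff]
    simpa using hsph r
  -- local integrability of ‖x‖^e * μ for e > -N₀
  have hSpow : ∀ e : ℝ, -N₀ < e → ∀ K : Set (EuclideanSpace ℝ (Fin N)), IsCompact K →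
      IntegrableOn (fun x => ‖x‖ ^ e * μ x) K := by
    intro e he K hK
    have hδ : -e < N₀ := by linarith
    obtain ⟨δ', hδ'S, hδδ'⟩ : ∃ δ' ∈ {δ : ℝ | ∀ K : Set (EuclideanSpace ℝ (Fin N)),
        IsCompact K → IntegrableOn (fun x => ‖x‖ ^ (-δ) * μ x) K}, -e < δ' := by
      by_contra h
      push_neg at h
      exact absurd (hN₀.2 fun s hs => (h s hs)) (not_le.mpr hδ)
    obtain ⟨R, hRK⟩ := (isBounded_iff_subset_closedBall 0).mp hK.isBounded
    have hR1 : (0:ℝ) < max R 1 := lt_of_lt_of_le one_pos (le_max_right _ _)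
    have hint := hδ'S K hK
    refine Integrable.mono' (hint.const_mul (max 1 ((max R 1) ^ (δ' - -e)))) ?_ ?_
    · exact ((measurable_norm.pow_const e).aestronglyMeasurable.mul
        (hloc K hK).aestronglyMeasurable)
    · have h0 : ∀ᵐ x : EuclideanSpace ℝ (Fin N) ∂(volume.restrict K), x ≠ 0 := by
        refine ae_restrict_of_ae ?_
        rw [ae_iff]
        simpa [not_not, Set.setOf_eq_eq_singleton] using hzero
      filter_upwards [ae_restrict_mem hK.measurableSet, h0] with x hxK hx0
      have hr : (0:ℝ) < ‖x‖ := norm_pos_iff.mpr hx0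
      have hμx := hμ x
      have hRx : ‖x‖ ≤ max R 1 := le_trans (mem_closedBall_zero_iff.mp (hRK hxK)) (le_max_left _ _)
      rw [Real.norm_eq_abs, abs_of_nonneg (mul_nonneg (Real.rpow_nonneg (norm_nonneg x) e) hμx)]
      rcases le_or_gt ‖x‖ 1 with hx1 | hx1
      · have hb : ‖x‖ ^ e ≤ ‖x‖ ^ (-δ') := by
          apply Real.rpow_le_rpow_of_exponent_ge hr hx1
          linarith
        calc ‖x‖ ^ e * μ x ≤ ‖x‖ ^ (-δ') * μ x := mul_le_mul_of_nonneg_right hb hμx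
          _ ≤ max 1 ((max R 1) ^ (δ' - -e)) * (‖x‖ ^ (-δ') * μ x) := by
              refine le_mul_of_one_le_left (mul_nonneg (Real.rpow_nonneg (norm_nonneg x) _) hμx)
                (le_max_left _ _)
      · have hb : ‖x‖ ^ e ≤ (max R 1) ^ (δ' - -e) * ‖x‖ ^ (-δ') := by
          have : ‖x‖ ^ e = ‖x‖ ^ (δ' - -e) * ‖x‖ ^ (-δ') := by
            rw [← Real.rpow_add hr]; ring_nf
          rw [this]
          refine mul_le_mul_of_nonneg_right ?_ (Real.rpow_nonneg (norm_nonneg x) _)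
          exact Real.rpow_le_rpow (norm_nonneg x) hRx (by linarith)
        calc ‖x‖ ^ e * μ x ≤ ((max R 1) ^ (δ' - -e) * ‖x‖ ^ (-δ')) * μ x :=
              mul_le_mul_of_nonneg_right hb hμx
          _ ≤ max 1 ((max R 1) ^ (δ' - -e)) * (‖x‖ ^ (-δ') * μ x) := by
              rw [mul_assoc]
              refine mul_le_mul_of_nonneg_right (le_max_right _ _)
                (mul_nonneg (Real.rpow_nonneg (norm_nonneg x) _) hμx)
  -- choice of exponents γ < α
  obtain ⟨γ, α, hγα, hγc, hαc, hγN, hαgs, hγgs⟩ :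
      ∃ γ α : ℝ, γ < α ∧ γ^2 < c ∧ α^2 < c ∧ -N₀/2 < γ ∧ (2-N₀)/2 < α ∧ γ < (2-N₀)/2 := by
    have hgs2 : ((2-N₀)/2)^2 < c := by
      rw [show ((2-N₀)/2)^2 = ((N₀-2)/2)^2 from by ring]; exact hc
    have hden : (0:ℝ) < 2*|(2-N₀)/2| + 2 := by positivity
    set η := min (1/2 : ℝ) ((c - ((2-N₀)/2)^2)/(2*|(2-N₀)/2| + 2)) with hη_def
    have hη0 : 0 < η := lt_min (by norm_num) (div_pos (by linarith) hden)
    have hη2 : η ≤ 1/2 := min_le_left _ _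
    have hη3 : η*(2*|(2-N₀)/2| + 2) ≤ c - ((2-N₀)/2)^2 :=
      (le_div_iff₀ hden).mp (min_le_right _ _)
    have habs : ∀ t : ℝ, |t| ≤ |(2-N₀)/2| + η → t^2 < c := by
      intro t ht
      have h1 : t^2 ≤ (|(2-N₀)/2| + η)^2 := by
        rw [← sq_abs t]
        exact pow_le_pow_left₀ (abs_nonneg t) ht 2
      have h2 : (|(2-N₀)/2| + η)^2 < c := by
        nlinarith [abs_nonneg ((2-N₀)/2), sq_abs ((2-N₀)/2)]
      linarith
    refine ⟨(2-N₀)/2 - η, (2-N₀)/2 + η, by linarith, ?_, ?_, by linarith, by linarith, by linarith⟩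
    · refine habs _ ?_
      calc |(2-N₀)/2 - η| ≤ |(2-N₀)/2| + |η| := abs_sub _ _
        _ = |(2-N₀)/2| + η := by rw [abs_of_pos hη0]
    · refine habs _ ?_
      calc |(2-N₀)/2 + η| ≤ |(2-N₀)/2| + |η| := abs_add_le _ _
        _ = |(2-N₀)/2| + η := by rw [abs_of_pos hη0]
  have hcγ : (0:ℝ) < c - γ^2 := by linarith
  -- basic functions
  set m : EuclideanSpace ℝ (Fin N) → ℝ := fun x => ‖x‖^(2*γ-2) * μ x with hm_def
  set q : EuclideanSpace ℝ (Fin N) → ℝ := fun x => ‖x‖^(2*γ) * μ x with hq_def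
  have hm_nonneg : ∀ x, 0 ≤ m x := fun x =>
    mul_nonneg (Real.rpow_nonneg (norm_nonneg x) _) (hμ x)
  -- integrability of m on annuli
  have hm_ann : ∀ a : ℝ, 0 < a →
      IntegrableOn m (closedBall (0:EuclideanSpace ℝ (Fin N)) 1 \ closedBall 0 a) := by
    intro a ha
    have hμint : IntegrableOn μ (closedBall (0:EuclideanSpace ℝ (Fin N)) 1 \ closedBall 0 a) :=
      (hloc _ (isCompact_closedBall 0 1)).mono_set diff_subset
    refine Integrable.mono' (hμint.const_mul (max (a^(2*γ-2)) 1)) ?_ ?_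
    · exact ((measurable_norm.pow_const (2*γ-2)).aestronglyMeasurable.mul
        hμint.aestronglyMeasurable)
    · filter_upwards [ae_restrict_mem ((measurableSet_closedBall).diff measurableSet_closedBall)]
        with x hx
      obtain ⟨hx1, hxa⟩ := hx
      rw [mem_closedBall_zero_iff] at hx1
      have hxa' : a < ‖x‖ := by
        by_contra h
        exact hxa (mem_closedBall_zero_iff.mpr (not_lt.mp h))
      rw [Real.norm_eq_abs, abs_of_nonneg (hm_nonneg x)]
      refine mul_le_mul_of_nonneg_right ?_ (hμ x)
      rcases le_or_gt 0 (2*γ-2) with he | he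
      · exact le_trans (Real.rpow_le_one (norm_nonneg x) hx1 he) (le_max_right _ _)
      · exact le_trans (Real.rpow_le_rpow_of_nonpos ha hxa'.le he.le) (le_max_left _ _)
  -- divergence of m near the origin
  have hMdiv : ∀ T : ℝ, ∃ a : ℝ, 0 < a ∧ a < 1 ∧
      T < ∫ x in closedBall (0:EuclideanSpace ℝ (Fin N)) 1 \ closedBall 0 a, m x := by
    have hbad1 : ¬ IntegrableOn m (closedBall (0:EuclideanSpace ℝ (Fin N)) 1) := by
      intro hint
      have h2γ : N₀ < 2 - 2*γ := by linarith
      have hnm : (2 - 2*γ) ∉ {δ : ℝ | ∀ K : Set (EuclideanSpace ℝ (Fin N)),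
          IsCompact K → IntegrableOn (fun x => ‖x‖ ^ (-δ) * μ x) K} := by
        intro hmem
        exact absurd (hN₀.1 hmem) (not_le.mpr h2γ)
      simp only [mem_setOf_eq, not_forall] at hnm
      obtain ⟨K, hK, hKbad⟩ := hnm
      apply hKbad
      have hfun : (fun x : EuclideanSpace ℝ (Fin N) => ‖x‖^(-(2-2*γ)) * μ x) = m := by
        funext x
        rw [hm_def, show -(2-2*γ) = 2*γ-2 by ring]
      rw [hfun]
      obtain ⟨R, hRK⟩ := (isBounded_iff_subset_closedBall 0).mp hK.isBounded
      have houter : IntegrableOn m (K \ ball 0 1) := by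
        have hμint : IntegrableOn μ (K \ ball (0:EuclideanSpace ℝ (Fin N)) 1) :=
          (hloc K hK).mono_set diff_subset
        refine Integrable.mono' (hμint.const_mul (max ((max R 1)^(2*γ-2)) 1)) ?_ ?_
        · exact ((measurable_norm.pow_const (2*γ-2)).aestronglyMeasurable.mul
            hμint.aestronglyMeasurable)
        · filter_upwards [ae_restrict_mem (hK.measurableSet.diff measurableSet_ball)]
            with x hx
          obtain ⟨hxK, hx1⟩ := hx
          have hx1' : 1 ≤ ‖x‖ := by
            by_contra h
            exact hx1 (mem_ball_zero_iff.mpr (not_le.mp h))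
          have hxR : ‖x‖ ≤ max R 1 :=
            le_trans (mem_closedBall_zero_iff.mp (hRK hxK)) (le_max_left _ _)
          rw [Real.norm_eq_abs, abs_of_nonneg (hm_nonneg x)]
          refine mul_le_mul_of_nonneg_right ?_ (hμ x)
          rcases le_or_gt 0 (2*γ-2) with he | he
          · exact le_trans (Real.rpow_le_rpow (norm_nonneg x) hxR he) (le_max_left _ _)
          · exact le_trans (Real.rpow_le_one_of_one_le_of_nonpos hx1' he.le) (le_max_right _ _)
      refine (hint.union houter).mono_set ?_
      intro x hx
      by_cases hx1 : x ∈ ball (0:EuclideanSpace ℝ (Fin N)) 1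
      · exact Or.inl (ball_subset_closedBall hx1)
      · exact Or.inr ⟨hx, hx1⟩
    intro T
    by_contra hcon
    push_neg at hcon
    apply hbad1
    have hmble : AEStronglyMeasurable m
        (volume.restrict (closedBall (0:EuclideanSpace ℝ (Fin N)) 1)) :=
      ((measurable_norm.pow_const (2*γ-2)).aestronglyMeasurable.mul
        (hloc _ (isCompact_closedBall 0 1)).aestronglyMeasurable)
    set A : ℕ → Set (EuclideanSpace ℝ (Fin N)) :=
      fun n => closedBall 0 1 \ closedBall 0 (1/((n:ℝ)+2)) with hA_def
    have hApos : ∀ n : ℕ, (0:ℝ) < 1/((n:ℝ)+2) := by intro n; positivity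
    have hAlt1 : ∀ n : ℕ, (1:ℝ)/((n:ℝ)+2) < 1 := by
      intro n
      rw [div_lt_one (by positivity)]
      push_cast; linarith [Nat.cast_nonneg (α := ℝ) n]
    have hAmeas : ∀ n, MeasurableSet (A n) :=
      fun n => measurableSet_closedBall.diff measurableSet_closedBall
    have hAmono : Monotone A := by
      refine monotone_nat_of_le_succ ?_
      intro n
      refine diff_subset_diff_right (closedBall_subset_closedBall ?_)
      refine one_div_le_one_div_of_le (by positivity) ?_
      push_cast; linarith
    have hintA : ∀ n, IntegrableOn m (A n) := fun n => hm_ann _ (hApos n)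
    have hg : AEMeasurable (fun x => ENNReal.ofReal (m x))
        (volume.restrict (closedBall (0:EuclideanSpace ℝ (Fin N)) 1)) :=
      ENNReal.measurable_ofReal.comp_aemeasurable hmble.aemeasurable
    have hsup := lintegral_iSup'
      (f := fun n => (A n).indicator (fun x => ENNReal.ofReal (m x)))
      (μ := volume.restrict (closedBall (0:EuclideanSpace ℝ (Fin N)) 1))
      (fun n => hg.indicator (hAmeas n))
      (Eventually.of_forall (fun x i j hij =>
        Set.indicator_le_indicator_of_subset (hAmono hij) (fun a => zero_le) x))
    have hbound : ∀ n, (∫⁻ x in closedBall (0:EuclideanSpace ℝ (Fin N)) 1,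
        (A n).indicator (fun x => ENNReal.ofReal (m x)) x) ≤ ENNReal.ofReal T := by
      intro n
      rw [lintegral_indicator (hAmeas n), Measure.restrict_restrict (hAmeas n),
        inter_eq_self_of_subset_left (diff_subset)]
      rw [← ofReal_integral_eq_lintegral_ofReal (hintA n)
        (Eventually.of_forall (fun x => hm_nonneg x))]
      exact ENNReal.ofReal_le_ofReal (hcon _ (hApos n) (hAlt1 n))
    have hptw : ∀ x : EuclideanSpace ℝ (Fin N),
        (⨆ n, (A n).indicator (fun x => ENNReal.ofReal (m x)) x)
        = ((closedBall (0:EuclideanSpace ℝ (Fin N)) 1 \ {0}).indicator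
            (fun x => ENNReal.ofReal (m x)) x) := by
      intro x
      apply le_antisymm
      · refine iSup_le fun n => ?_
        by_cases hxn : x ∈ A n
        · rw [Set.indicator_of_mem hxn, Set.indicator_of_mem]
          refine ⟨hxn.1, ?_⟩
          intro h0
          rw [mem_singleton_iff] at h0
          have := hxn.2
          apply this
          rw [h0]
          exact mem_closedBall_self (hApos n).le
        · rw [Set.indicator_of_notMem hxn]; exact zero_le
      · by_cases hx : x ∈ closedBall (0:EuclideanSpace ℝ (Fin N)) 1 \ {0}
        · have hx1 := hx.1
          have hx0' : x ≠ 0 := by simpa using hx.2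
          have hr : (0:ℝ) < ‖x‖ := norm_pos_iff.mpr hx0'
          obtain ⟨n0, hn0⟩ := exists_nat_gt (1/‖x‖)
          have hxA : x ∈ A n0 := by
            refine ⟨hx1, ?_⟩
            rw [mem_closedBall_zero_iff, not_le]
            rw [one_div_lt (by positivity) hr]
            calc 1/‖x‖ < n0 := hn0
              _ ≤ (n0:ℝ) + 2 := by linarith
          rw [Set.indicator_of_mem hx]
          refine le_iSup_of_le n0 ?_
          rw [Set.indicator_of_mem hxA]
        · rw [Set.indicator_of_notMem hx]; exact zero_le
    have hfin : (∫⁻ x in closedBall (0:EuclideanSpace ℝ (Fin N)) 1,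
        (closedBall (0:EuclideanSpace ℝ (Fin N)) 1 \ {0}).indicator
          (fun x => ENNReal.ofReal (m x)) x) < ⊤ := by
      rw [← lintegral_congr hptw, hsup]
      exact lt_of_le_of_lt (iSup_le hbound) ENNReal.ofReal_lt_top
    have hmeas0 : MeasurableSet (closedBall (0:EuclideanSpace ℝ (Fin N)) 1 \ {0}) :=
      measurableSet_closedBall.diff (measurableSet_singleton 0)
    have hintd : IntegrableOn m (closedBall (0:EuclideanSpace ℝ (Fin N)) 1 \ {0}) := by
      constructor
      · exact hmble.mono_measure (Measure.restrict_mono diff_subset le_rfl)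
      · rw [hasFiniteIntegral_iff_ofReal (Eventually.of_forall (fun x => hm_nonneg x))]
        rw [lintegral_indicator hmeas0, Measure.restrict_restrict hmeas0,
          inter_eq_self_of_subset_left diff_subset] at hfin
        exact hfin
    refine hintd.congr_set_ae ?_
    refine (MeasureTheory.diff_ae_eq_self.mpr ?_).symm
    refine measure_mono_null (fun y hy => ?_) hzero
    exact hy.2
  -- fixed constants
  set s₃ : Set (EuclideanSpace ℝ (Fin N)) := closedBall 0 2 \ closedBall 0 1 with hs₃_def
  have hms₃ : MeasurableSet s₃ := measurableSet_closedBall.diff measurableSet_closedBall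
  set P : ℝ := ∫ x in s₃, μ x with hP_def
  set Q : ℝ := ∫ x in closedBall (0:EuclideanSpace ℝ (Fin N)) 1, q x with hQ_def
  have hP0 : 0 ≤ P := setIntegral_nonneg hms₃ (fun x _ => hμ x)
  have hQ0 : 0 ≤ Q := setIntegral_nonneg measurableSet_closedBall
    (fun x _ => mul_nonneg (Real.rpow_nonneg (norm_nonneg x) _) (hμ x))
  set Cp : ℝ := max C 0 with hCp_def
  have hCp0 : 0 ≤ Cp := le_max_right _ _
  obtain ⟨a, ha, ha1, hM0⟩ := hMdiv ((P + Cp * (Q + P) + 1)/(c - γ^2))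
  set s₁ : Set (EuclideanSpace ℝ (Fin N)) := closedBall 0 a with hs₁_def
  set s₂ : Set (EuclideanSpace ℝ (Fin N)) := closedBall 0 1 \ closedBall 0 a with hs₂_def
  have hms₁ : MeasurableSet s₁ := measurableSet_closedBall
  have hms₂ : MeasurableSet s₂ := measurableSet_closedBall.diff measurableSet_closedBall
  set M0 : ℝ := ∫ x in s₂, m x with hM0_def
  have hM0T : (P + Cp * (Q + P) + 1)/(c - γ^2) < M0 := hM0
  have hM0key : P + Cp * (Q + P) + 1 < M0 * (c - γ^2) := (div_lt_iff₀ hcγ).mp hM0T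
  -- the test function
  set φ : EuclideanSpace ℝ (Fin N) → ℝ := fun x =>
    if ‖x‖ ≤ a then a^(γ-α) * ‖x‖^α else if ‖x‖ ≤ 1 then ‖x‖^γ else max (2 - ‖x‖) 0
    with hφ_def
  set ψ : EuclideanSpace ℝ (Fin N) → ℝ := fun x =>
    if ‖x‖ ≤ a then |α| * a^(γ-α) * ‖x‖^(α-1) else if ‖x‖ ≤ 1 then |γ| * ‖x‖^(γ-1)
    else if ‖x‖ ≤ 2 then 1 else 0
    with hψ_def
  have hφ1 : ∀ x : EuclideanSpace ℝ (Fin N), ‖x‖ ≤ a → φ x = a^(γ-α) * ‖x‖^α := by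
    intro x h; simp only [hφ_def]; rw [if_pos h]
  have hφ2 : ∀ x : EuclideanSpace ℝ (Fin N), a < ‖x‖ → ‖x‖ ≤ 1 → φ x = ‖x‖^γ := by
    intro x h h'; simp only [hφ_def]; rw [if_neg (not_le.mpr h), if_pos h']
  have hφ3 : ∀ x : EuclideanSpace ℝ (Fin N), 1 < ‖x‖ → ‖x‖ ≤ 2 → φ x = 2 - ‖x‖ := by
    intro x h h'; simp only [hφ_def]
    rw [if_neg (not_le.mpr (lt_trans ha1 h)), if_neg (not_le.mpr h)]
    exact max_eq_left (by linarith)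
  have hφ4 : ∀ x : EuclideanSpace ℝ (Fin N), 2 < ‖x‖ → φ x = 0 := by
    intro x h; simp only [hφ_def]
    rw [if_neg (not_le.mpr (by linarith [ha1])), if_neg (not_le.mpr (by linarith))]
    exact max_eq_right (by linarith)
  -- gradient computation a.e.
  have hGood : ∀ᵐ x : EuclideanSpace ℝ (Fin N),
      0 < ‖x‖ ∧ ‖x‖ ≠ a ∧ ‖x‖ ≠ 1 ∧ ‖x‖ ≠ 2 := by
    filter_upwards [hne 0, hne a, hne 1, hne 2] with x h0 hA h1 h2
    exact ⟨lt_of_le_of_ne (norm_nonneg x) (Ne.symm h0), hA, h1, h2⟩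
  have hgrad : ∀ᵐ x : EuclideanSpace ℝ (Fin N),
      DifferentiableAt ℝ φ x ∧ ‖gradient φ x‖ = ψ x := by
    filter_upwards [hGood] with x hx
    obtain ⟨hr, hra, hr1, hr2⟩ := hx
    have hx0 : x ≠ 0 := fun h => by simp [h] at hr
    rcases lt_or_gt_of_ne hra with hca | hca
    · -- region 1 : ‖x‖ < a
      have hev : φ =ᶠ[nhds x] fun y => a^(γ-α) * ‖y‖^α := by
        filter_upwards [(isOpen_lt continuous_norm continuous_const).mem_nhds
          (show ‖x‖ < a from hca)] with y hy
        exact hφ1 y hy.le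
      have hg : HasGradientAt φ ((a^(γ-α) * (α * ‖x‖^(α-2))) • x) x := by
        have h := hasGradientAt_const_mul (a^(γ-α)) (hasGradientAt_norm_rpow α hx0)
        rw [smul_smul] at h
        exact h.congr_of_eventuallyEq hev
      refine ⟨hg.differentiableAt, ?_⟩
      rw [hg.gradient, hψ_def]
      simp only
      rw [if_pos hca.le, norm_smul, Real.norm_eq_abs, abs_mul, abs_mul,
        abs_of_pos (Real.rpow_pos_of_pos ha _),
        abs_of_nonneg (Real.rpow_nonneg (norm_nonneg x) _),
        show ‖x‖^(α-1) = ‖x‖^(α-2) * ‖x‖ by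
          rw [show α - 1 = (α-2) + 1 by ring, Real.rpow_add_one (ne_of_gt hr)]]
      ring
    · rcases lt_or_gt_of_ne hr1 with hc1 | hc1
      · -- region 2 : a < ‖x‖ < 1
        have hopen : IsOpen {y : EuclideanSpace ℝ (Fin N) | a < ‖y‖ ∧ ‖y‖ < 1} :=
          (isOpen_lt continuous_const continuous_norm).inter
            (isOpen_lt continuous_norm continuous_const)
        have hev : φ =ᶠ[nhds x] fun y => ‖y‖^γ := by
          filter_upwards [hopen.mem_nhds (⟨hca, hc1⟩ :
            x ∈ {y : EuclideanSpace ℝ (Fin N) | a < ‖y‖ ∧ ‖y‖ < 1})] with y hy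
          exact hφ2 y hy.1 hy.2.le
        have hg : HasGradientAt φ ((γ * ‖x‖^(γ-2)) • x) x :=
          (hasGradientAt_norm_rpow γ hx0).congr_of_eventuallyEq hev
        refine ⟨hg.differentiableAt, ?_⟩
        rw [hg.gradient, hψ_def]
        simp only
        rw [if_neg (not_le.mpr hca), if_pos hc1.le, norm_smul, Real.norm_eq_abs, abs_mul,
          abs_of_nonneg (Real.rpow_nonneg (norm_nonneg x) _),
          show ‖x‖^(γ-1) = ‖x‖^(γ-2) * ‖x‖ by
            rw [show γ - 1 = (γ-2) + 1 by ring, Real.rpow_add_one (ne_of_gt hr)]]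
        ring
      · rcases lt_or_gt_of_ne hr2 with hc2 | hc2
        · -- region 3 : 1 < ‖x‖ < 2
          have hopen : IsOpen {y : EuclideanSpace ℝ (Fin N) | 1 < ‖y‖ ∧ ‖y‖ < 2} :=
            (isOpen_lt continuous_const continuous_norm).inter
              (isOpen_lt continuous_norm continuous_const)
          have hev : φ =ᶠ[nhds x] fun y => 2 - ‖y‖ := by
            filter_upwards [hopen.mem_nhds (⟨hc1, hc2⟩ :
              x ∈ {y : EuclideanSpace ℝ (Fin N) | 1 < ‖y‖ ∧ ‖y‖ < 2})] with y hy
            exact hφ3 y hy.1 hy.2.le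
          have hn1 : HasGradientAt (fun y : EuclideanSpace ℝ (Fin N) => ‖y‖)
              ((1 * ‖x‖^((1:ℝ)-2)) • x) x := by
            have h := hasGradientAt_norm_rpow 1 hx0
            have hfe : (fun y : EuclideanSpace ℝ (Fin N) => ‖y‖^(1:ℝ))
                = fun y : EuclideanSpace ℝ (Fin N) => ‖y‖ := by
              funext y; rw [Real.rpow_one]
            rwa [hfe] at h
          have hg : HasGradientAt φ (-((1 * ‖x‖^((1:ℝ)-2)) • x)) x :=
            (hasGradientAt_const_sub 2 hn1).congr_of_eventuallyEq hev
          refine ⟨hg.differentiableAt, ?_⟩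
          rw [hg.gradient, hψ_def]
          simp only
          rw [if_neg (not_le.mpr (lt_trans ha1 hc1)), if_neg (not_le.mpr hc1),
            if_pos hc2.le, norm_neg, norm_smul, Real.norm_eq_abs, one_mul,
            show (1:ℝ) - 2 = -1 by norm_num, Real.rpow_neg_one,
            abs_of_pos (by positivity), inv_mul_cancel₀ (ne_of_gt hr)]
        · -- region 4 : ‖x‖ > 2
          have hev : φ =ᶠ[nhds x] fun _ => (0:ℝ) := by
            filter_upwards [(isOpen_lt continuous_const continuous_norm).mem_nhds hc2] with y hy
            exact hφ4 y hy
          have hg : HasGradientAt φ 0 x :=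
            (hasGradientAt_const x (0:ℝ)).congr_of_eventuallyEq hev
          refine ⟨hg.differentiableAt, ?_⟩
          rw [hg.gradient, hψ_def]
          simp only
          rw [if_neg (not_le.mpr (by linarith)), if_neg (not_le.mpr (by linarith)),
            if_neg (not_le.mpr hc2), norm_zero]
  -- region pieces
  set u₁ : EuclideanSpace ℝ (Fin N) → ℝ :=
    s₁.indicator (fun x => a^(2*γ-2*α) * (‖x‖^(2*α-2) * μ x)) with hu₁_def
  set u₂ : EuclideanSpace ℝ (Fin N) → ℝ := s₂.indicator m with hu₂_def
  set u₃ : EuclideanSpace ℝ (Fin N) → ℝ := s₃.indicator μ with hu₃_def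
  set uA3 : EuclideanSpace ℝ (Fin N) → ℝ :=
    s₃.indicator (fun x => (2-‖x‖)^2/‖x‖^2 * μ x) with huA3_def
  set uD1 : EuclideanSpace ℝ (Fin N) → ℝ :=
    s₁.indicator (fun x => a^(2*γ-2*α) * (‖x‖^(2*α) * μ x)) with huD1_def
  set uD2 : EuclideanSpace ℝ (Fin N) → ℝ := s₂.indicator q with huD2_def
  set uD3 : EuclideanSpace ℝ (Fin N) → ℝ :=
    s₃.indicator (fun x => (2-‖x‖)^2 * μ x) with huD3_def
  have hμs₃ : IntegrableOn μ s₃ :=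
    (hloc _ (isCompact_closedBall 0 2)).mono_set diff_subset
  have hqcb1 : IntegrableOn q (closedBall (0:EuclideanSpace ℝ (Fin N)) 1) := by
    have := hSpow (2*γ) (by linarith) _ (isCompact_closedBall (0:EuclideanSpace ℝ (Fin N)) 1)
    rw [hq_def]; exact this
  have hqs₂ : IntegrableOn q s₂ := hqcb1.mono_set diff_subset
  have hiu₁ : Integrable u₁ := by
    rw [hu₁_def]
    refine (integrable_indicator_iff hms₁).mpr ?_
    exact (hSpow (2*α-2) (by linarith) _ (isCompact_closedBall 0 a)).const_mul _
  have hiu₂ : Integrable u₂ := by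
    rw [hu₂_def]
    exact (integrable_indicator_iff hms₂).mpr (hm_ann a ha)
  have hiu₃ : Integrable u₃ := by
    rw [hu₃_def]
    exact (integrable_indicator_iff hms₃).mpr hμs₃
  have hs₃mem : ∀ x : EuclideanSpace ℝ (Fin N), x ∈ s₃ → 1 < ‖x‖ ∧ ‖x‖ ≤ 2 := by
    intro x hx
    constructor
    · by_contra h
      exact hx.2 (mem_closedBall_zero_iff.mpr (not_lt.mp h))
    · exact mem_closedBall_zero_iff.mp hx.1
  have hiuA3 : Integrable uA3 := by
    rw [huA3_def]
    refine (integrable_indicator_iff hms₃).mpr ?_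
    refine Integrable.mono' hμs₃ ?_ ?_
    · exact ((((measurable_const.sub measurable_norm).pow_const 2).div
        (measurable_norm.pow_const 2)).aestronglyMeasurable.mul hμs₃.aestronglyMeasurable)
    · filter_upwards [ae_restrict_mem hms₃] with x hx
      obtain ⟨hx1, hx2⟩ := hs₃mem x hx
      rw [Real.norm_eq_abs,
        abs_of_nonneg (mul_nonneg (div_nonneg (sq_nonneg _) (sq_nonneg _)) (hμ x))]
      refine mul_le_of_le_one_left (hμ x) ?_
      rw [div_le_one (by positivity)]
      nlinarith
  have hiuD1 : Integrable uD1 := by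
    rw [huD1_def]
    refine (integrable_indicator_iff hms₁).mpr ?_
    exact (hSpow (2*α) (by linarith) _ (isCompact_closedBall 0 a)).const_mul _
  have hiuD2 : Integrable uD2 := by
    rw [huD2_def]
    exact (integrable_indicator_iff hms₂).mpr hqs₂
  have hiuD3 : Integrable uD3 := by
    rw [huD3_def]
    refine (integrable_indicator_iff hms₃).mpr ?_
    refine Integrable.mono' hμs₃ ?_ ?_
    · exact (((measurable_const.sub measurable_norm).pow_const 2).aestronglyMeasurable.mul
        hμs₃.aestronglyMeasurable)
    · filter_upwards [ae_restrict_mem hms₃] with x hx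
      obtain ⟨hx1, hx2⟩ := hs₃mem x hx
      rw [Real.norm_eq_abs, abs_of_nonneg (mul_nonneg (sq_nonneg _) (hμ x))]
      refine mul_le_of_le_one_left (hμ x) ?_
      nlinarith
  -- a.e. identities
  have hae_A : (fun x => φ x ^ 2 / ‖x‖ ^ 2 * μ x)
      =ᵐ[volume] (fun x => u₁ x + u₂ x + uA3 x) := by
    filter_upwards [hGood] with x hx
    obtain ⟨hr, hra, hr1, hr2⟩ := hx
    rcases lt_or_gt_of_ne hra with hca | hca
    · have hm1 : x ∈ s₁ := mem_closedBall_zero_iff.mpr hca.le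
      have hm2 : x ∉ s₂ := fun h => h.2 hm1
      have hm3 : x ∉ s₃ := fun h =>
        h.2 (mem_closedBall_zero_iff.mpr (by linarith))
      rw [hφ1 x hca.le]
      simp only [hu₁_def, hu₂_def, huA3_def]
      rw [Set.indicator_of_mem hm1, Set.indicator_of_notMem hm2,
        Set.indicator_of_notMem hm3, add_zero, add_zero, mul_pow,
        rpow_sq_helper ha (γ-α), rpow_sq_helper hr α,
        show 2*(γ-α) = 2*γ-2*α by ring, sq_rpow_helper ‖x‖, mul_div_assoc,
        ← Real.rpow_sub hr]
      ring
    · rcases lt_or_gt_of_ne hr1 with hc1 | hc1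
      · have hm1 : x ∉ s₁ := fun h => absurd (mem_closedBall_zero_iff.mp h) (not_le.mpr hca)
        have hm2 : x ∈ s₂ := ⟨mem_closedBall_zero_iff.mpr hc1.le, hm1⟩
        have hm3 : x ∉ s₃ := fun h => h.2 (mem_closedBall_zero_iff.mpr hc1.le)
        rw [hφ2 x hca hc1.le]
        simp only [hu₁_def, hu₂_def, huA3_def]
        rw [Set.indicator_of_notMem hm1, Set.indicator_of_mem hm2,
          Set.indicator_of_notMem hm3, zero_add, add_zero, hm_def,
          rpow_sq_helper hr γ, sq_rpow_helper ‖x‖, ← Real.rpow_sub hr]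
      · rcases lt_or_gt_of_ne hr2 with hc2 | hc2
        · have hm1 : x ∉ s₁ := fun h =>
            absurd (mem_closedBall_zero_iff.mp h) (not_le.mpr (by linarith))
          have hm2 : x ∉ s₂ := fun h =>
            absurd (mem_closedBall_zero_iff.mp h.1) (not_le.mpr hc1)
          have hm3 : x ∈ s₃ := ⟨mem_closedBall_zero_iff.mpr hc2.le,
            fun h => absurd (mem_closedBall_zero_iff.mp h) (not_le.mpr hc1)⟩
          rw [hφ3 x hc1 hc2.le]
          simp only [hu₁_def, hu₂_def, huA3_def]
          rw [Set.indicator_of_notMem hm1, Set.indicator_of_notMem hm2,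
            Set.indicator_of_mem hm3, zero_add, zero_add]
        · have hm1 : x ∉ s₁ := fun h =>
            absurd (mem_closedBall_zero_iff.mp h) (not_le.mpr (by linarith))
          have hm2 : x ∉ s₂ := fun h =>
            absurd (mem_closedBall_zero_iff.mp h.1) (not_le.mpr (by linarith))
          have hm3 : x ∉ s₃ := fun h =>
            absurd (mem_closedBall_zero_iff.mp h.1) (not_le.mpr hc2)
          rw [hφ4 x hc2]
          simp only [hu₁_def, hu₂_def, huA3_def]
          rw [Set.indicator_of_notMem hm1, Set.indicator_of_notMem hm2,
            Set.indicator_of_notMem hm3]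
          simp
  have hae_B : (fun x => ‖gradient φ x‖ ^ 2 * μ x)
      =ᵐ[volume] (fun x => α^2 * u₁ x + γ^2 * u₂ x + u₃ x) := by
    filter_upwards [hGood, hgrad] with x hx hgx
    obtain ⟨hr, hra, hr1, hr2⟩ := hx
    rw [hgx.2, hψ_def]
    simp only
    rcases lt_or_gt_of_ne hra with hca | hca
    · have hm1 : x ∈ s₁ := mem_closedBall_zero_iff.mpr hca.le
      have hm2 : x ∉ s₂ := fun h => h.2 hm1
      have hm3 : x ∉ s₃ := fun h =>
        h.2 (mem_closedBall_zero_iff.mpr (by linarith))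
      rw [if_pos hca.le]
      simp only [hu₁_def, hu₂_def, hu₃_def]
      rw [Set.indicator_of_mem hm1, Set.indicator_of_notMem hm2,
        Set.indicator_of_notMem hm3, mul_zero, add_zero, add_zero, mul_pow, mul_pow,
        sq_abs, rpow_sq_helper ha (γ-α), rpow_sq_helper hr (α-1),
        show 2*(γ-α) = 2*γ-2*α by ring, show 2*(α-1) = 2*α-2 by ring]
      ring
    · rcases lt_or_gt_of_ne hr1 with hc1 | hc1
      · have hm1 : x ∉ s₁ := fun h => absurd (mem_closedBall_zero_iff.mp h) (not_le.mpr hca)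
        have hm2 : x ∈ s₂ := ⟨mem_closedBall_zero_iff.mpr hc1.le, hm1⟩
        have hm3 : x ∉ s₃ := fun h => h.2 (mem_closedBall_zero_iff.mpr hc1.le)
        rw [if_neg (not_le.mpr hca), if_pos hc1.le]
        simp only [hu₁_def, hu₂_def, hu₃_def]
        rw [Set.indicator_of_notMem hm1, Set.indicator_of_mem hm2,
          Set.indicator_of_notMem hm3, mul_zero, zero_add, add_zero, hm_def, mul_pow,
          sq_abs, rpow_sq_helper hr (γ-1), show 2*(γ-1) = 2*γ-2 by ring]
        ring
      · rcases lt_or_gt_of_ne hr2 with hc2 | hc2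
        · have hm1 : x ∉ s₁ := fun h =>
            absurd (mem_closedBall_zero_iff.mp h) (not_le.mpr (by linarith))
          have hm2 : x ∉ s₂ := fun h =>
            absurd (mem_closedBall_zero_iff.mp h.1) (not_le.mpr hc1)
          have hm3 : x ∈ s₃ := ⟨mem_closedBall_zero_iff.mpr hc2.le,
            fun h => absurd (mem_closedBall_zero_iff.mp h) (not_le.mpr hc1)⟩
          rw [if_neg (not_le.mpr (lt_trans ha1 hc1)), if_neg (not_le.mpr hc1),
            if_pos hc2.le]
          simp only [hu₁_def, hu₂_def, hu₃_def]
          rw [Set.indicator_of_notMem hm1, Set.indicator_of_notMem hm2,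
            Set.indicator_of_mem hm3, mul_zero, mul_zero, zero_add, zero_add,
            one_pow, one_mul]
        · have hm1 : x ∉ s₁ := fun h =>
            absurd (mem_closedBall_zero_iff.mp h) (not_le.mpr (by linarith))
          have hm2 : x ∉ s₂ := fun h =>
            absurd (mem_closedBall_zero_iff.mp h.1) (not_le.mpr (by linarith))
          have hm3 : x ∉ s₃ := fun h =>
            absurd (mem_closedBall_zero_iff.mp h.1) (not_le.mpr hc2)
          rw [if_neg (not_le.mpr (by linarith)), if_neg (not_le.mpr (by linarith)),
            if_neg (not_le.mpr hc2)]
          simp only [hu₁_def, hu₂_def, hu₃_def]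
          rw [Set.indicator_of_notMem hm1, Set.indicator_of_notMem hm2,
            Set.indicator_of_notMem hm3]
          simp
  have hae_D : (fun x => φ x ^ 2 * μ x)
      =ᵐ[volume] (fun x => uD1 x + uD2 x + uD3 x) := by
    filter_upwards [hGood] with x hx
    obtain ⟨hr, hra, hr1, hr2⟩ := hx
    rcases lt_or_gt_of_ne hra with hca | hca
    · have hm1 : x ∈ s₁ := mem_closedBall_zero_iff.mpr hca.le
      have hm2 : x ∉ s₂ := fun h => h.2 hm1
      have hm3 : x ∉ s₃ := fun h =>
        h.2 (mem_closedBall_zero_iff.mpr (by linarith))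
      rw [hφ1 x hca.le]
      simp only [huD1_def, huD2_def, huD3_def]
      rw [Set.indicator_of_mem hm1, Set.indicator_of_notMem hm2,
        Set.indicator_of_notMem hm3, add_zero, add_zero, mul_pow,
        rpow_sq_helper ha (γ-α), rpow_sq_helper hr α, show 2*(γ-α) = 2*γ-2*α by ring]
      ring
    · rcases lt_or_gt_of_ne hr1 with hc1 | hc1
      · have hm1 : x ∉ s₁ := fun h => absurd (mem_closedBall_zero_iff.mp h) (not_le.mpr hca)
        have hm2 : x ∈ s₂ := ⟨mem_closedBall_zero_iff.mpr hc1.le, hm1⟩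
        have hm3 : x ∉ s₃ := fun h => h.2 (mem_closedBall_zero_iff.mpr hc1.le)
        rw [hφ2 x hca hc1.le]
        simp only [huD1_def, huD2_def, huD3_def]
        rw [Set.indicator_of_notMem hm1, Set.indicator_of_mem hm2,
          Set.indicator_of_notMem hm3, zero_add, add_zero, hq_def,
          rpow_sq_helper hr γ]
      · rcases lt_or_gt_of_ne hr2 with hc2 | hc2
        · have hm1 : x ∉ s₁ := fun h =>
            absurd (mem_closedBall_zero_iff.mp h) (not_le.mpr (by linarith))
          have hm2 : x ∉ s₂ := fun h =>
            absurd (mem_closedBall_zero_iff.mp h.1) (not_le.mpr hc1)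
          have hm3 : x ∈ s₃ := ⟨mem_closedBall_zero_iff.mpr hc2.le,
            fun h => absurd (mem_closedBall_zero_iff.mp h) (not_le.mpr hc1)⟩
          rw [hφ3 x hc1 hc2.le]
          simp only [huD1_def, huD2_def, huD3_def]
          rw [Set.indicator_of_notMem hm1, Set.indicator_of_notMem hm2,
            Set.indicator_of_mem hm3, zero_add, zero_add]
        · have hm1 : x ∉ s₁ := fun h =>
            absurd (mem_closedBall_zero_iff.mp h) (not_le.mpr (by linarith))
          have hm2 : x ∉ s₂ := fun h =>
            absurd (mem_closedBall_zero_iff.mp h.1) (not_le.mpr (by linarith))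
          have hm3 : x ∉ s₃ := fun h =>
            absurd (mem_closedBall_zero_iff.mp h.1) (not_le.mpr hc2)
          rw [hφ4 x hc2]
          simp only [huD1_def, huD2_def, huD3_def]
          rw [Set.indicator_of_notMem hm1, Set.indicator_of_notMem hm2,
            Set.indicator_of_notMem hm3]
          simp
  -- global integrability
  have hintD : Integrable (fun x => φ x ^ 2 * μ x) :=
    (((hiuD1.add hiuD2).add hiuD3).congr hae_D.symm)
  have hintB : Integrable (fun x => ‖gradient φ x‖ ^ 2 * μ x) :=
    ((((hiu₁.const_mul (α^2)).add (hiu₂.const_mul (γ^2))).add hiu₃).congr hae_B.symm)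
  have hintA : Integrable (fun x => φ x ^ 2 / ‖x‖ ^ 2 * μ x) :=
    (((hiu₁.add hiu₂).add hiuA3).congr hae_A.symm)
  -- integral identities
  have hu₂_int : ∫ x, u₂ x = M0 := by
    rw [hu₂_def, integral_indicator hms₂]
  have hu₃_int : ∫ x, u₃ x = P := by
    rw [hu₃_def, integral_indicator hms₃]
  have huD2_int : ∫ x, uD2 x = ∫ x in s₂, q x := by
    rw [huD2_def, integral_indicator hms₂]
  have hI0 : 0 ≤ ∫ x, u₁ x := by
    refine integral_nonneg fun x => ?_
    refine Set.indicator_nonneg (fun y _ => ?_) x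
    exact mul_nonneg (Real.rpow_nonneg ha.le _)
      (mul_nonneg (Real.rpow_nonneg (norm_nonneg y) _) (hμ y))
  have hA3nn : 0 ≤ ∫ x, uA3 x := by
    refine integral_nonneg fun x => ?_
    refine Set.indicator_nonneg (fun y _ => ?_) x
    exact mul_nonneg (div_nonneg (sq_nonneg _) (sq_nonneg _)) (hμ y)
  have hD1nn : 0 ≤ ∫ x, uD1 x := by
    refine integral_nonneg fun x => ?_
    refine Set.indicator_nonneg (fun y _ => ?_) x
    exact mul_nonneg (Real.rpow_nonneg ha.le _)
      (mul_nonneg (Real.rpow_nonneg (norm_nonneg y) _) (hμ y))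
  have hD3nn : 0 ≤ ∫ x, uD3 x := by
    refine integral_nonneg fun x => ?_
    refine Set.indicator_nonneg (fun y _ => ?_) x
    exact mul_nonneg (sq_nonneg _) (hμ y)
  have hD_eq : ∫ x, φ x ^ 2 * μ x = (∫ x, uD1 x) + (∫ x, uD2 x) + (∫ x, uD3 x) := by
    rw [integral_congr_ae hae_D,
      integral_add (f := fun x => uD1 x + uD2 x) (g := fun x => uD3 x)
        (hiuD1.add hiuD2) hiuD3,
      integral_add hiuD1 hiuD2]
  have hB_eq : ∫ x, ‖gradient φ x‖ ^ 2 * μ x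
      = α^2 * (∫ x, u₁ x) + γ^2 * M0 + P := by
    rw [integral_congr_ae hae_B,
      integral_add (f := fun x => α^2 * u₁ x + γ^2 * u₂ x) (g := fun x => u₃ x)
        ((hiu₁.const_mul (α^2)).add (hiu₂.const_mul (γ^2))) hiu₃,
      integral_add (hiu₁.const_mul (α^2)) (hiu₂.const_mul (γ^2)),
      integral_const_mul, integral_const_mul, hu₂_int, hu₃_int]
  have hA_ge : (∫ x, u₁ x) + M0 ≤ ∫ x, φ x ^ 2 / ‖x‖ ^ 2 * μ x := by
    rw [integral_congr_ae hae_A,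
      integral_add (f := fun x => u₁ x + u₂ x) (g := fun x => uA3 x)
        (hiu₁.add hiu₂) hiuA3,
      integral_add hiu₁ hiu₂, hu₂_int]
    linarith
  -- lower bound for D
  have hM0pos : 0 < M0 := by
    by_contra h
    push_neg at h
    have h1 : M0 * (c - γ^2) ≤ 0 := mul_nonpos_of_nonpos_of_nonneg h hcγ.le
    nlinarith [mul_nonneg hCp0 (add_nonneg hQ0 hP0)]
  have hDu2 : a^2 * M0 ≤ ∫ x, uD2 x := by
    rw [huD2_int, hM0_def, ← integral_const_mul]
    refine setIntegral_mono_on ((hm_ann a ha).const_mul (a^2)) hqs₂ hms₂ ?_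
    intro x hx
    have hxa : a < ‖x‖ := by
      by_contra h
      exact hx.2 (mem_closedBall_zero_iff.mpr (not_lt.mp h))
    have hr : (0:ℝ) < ‖x‖ := lt_trans ha hxa
    have hqm : q x = ‖x‖^2 * m x := by
      simp only [hq_def, hm_def]
      rw [sq_rpow_helper ‖x‖, ← mul_assoc, ← Real.rpow_add hr]
      ring_nf
    rw [hqm, hm_def]
    refine mul_le_mul_of_nonneg_right ?_ (hm_nonneg x)
    calc a^2 ≤ ‖x‖^2 := by nlinarith
      _ = ‖x‖^2 := rfl
  have hD_pos : 0 < ∫ x, φ x ^ 2 * μ x := by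
    rw [hD_eq]
    have : 0 < a^2 * M0 := mul_pos (pow_pos ha 2) hM0pos
    linarith [hDu2]
  -- upper bound for D
  have hD_le : ∫ x, φ x ^ 2 * μ x ≤ Q + P := by
    rw [hD_eq]
    have h12 : (∫ x, uD1 x) + (∫ x, uD2 x)
        ≤ ∫ x, (closedBall (0:EuclideanSpace ℝ (Fin N)) 1).indicator q x := by
      rw [← integral_add hiuD1 hiuD2]
      refine integral_mono_ae (hiuD1.add hiuD2)
        ((integrable_indicator_iff measurableSet_closedBall).mpr hqcb1) ?_
      filter_upwards [hGood] with x hx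
      obtain ⟨hr, hra, hr1, hr2⟩ := hx
      have hqnn : 0 ≤ q x := mul_nonneg (Real.rpow_nonneg (norm_nonneg x) _) (hμ x)
      rcases lt_or_gt_of_ne hra with hca | hca
      · have hm1 : x ∈ s₁ := mem_closedBall_zero_iff.mpr hca.le
        have hm2 : x ∉ s₂ := fun h => h.2 hm1
        have hmb : x ∈ closedBall (0:EuclideanSpace ℝ (Fin N)) 1 :=
          mem_closedBall_zero_iff.mpr (by linarith)
        simp only [huD1_def, huD2_def]
        rw [Set.indicator_of_mem hm1, Set.indicator_of_notMem hm2,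
          Set.indicator_of_mem hmb, add_zero]
        have key : a^(2*γ-2*α) * ‖x‖^(2*α) ≤ ‖x‖^(2*γ) := by
          have h1 : ‖x‖^(2*α) = ‖x‖^(2*γ) * ‖x‖^(2*α-2*γ) := by
            rw [← Real.rpow_add hr]; ring_nf
          rw [h1]
          calc a^(2*γ-2*α) * (‖x‖^(2*γ) * ‖x‖^(2*α-2*γ))
              ≤ a^(2*γ-2*α) * (‖x‖^(2*γ) * a^(2*α-2*γ)) := by
                refine mul_le_mul_of_nonneg_left (mul_le_mul_of_nonneg_left
                  (Real.rpow_le_rpow (norm_nonneg x) hca.le (by linarith))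
                  (Real.rpow_nonneg (norm_nonneg x) _)) (Real.rpow_nonneg ha.le _)
            _ = ‖x‖^(2*γ) := by
                rw [show a^(2*γ-2*α) * (‖x‖^(2*γ) * a^(2*α-2*γ))
                    = (a^(2*γ-2*α) * a^(2*α-2*γ)) * ‖x‖^(2*γ) by ring,
                  ← Real.rpow_add ha, show (2*γ-2*α) + (2*α-2*γ) = 0 by ring,
                  Real.rpow_zero, one_mul]
        calc a^(2*γ-2*α) * (‖x‖^(2*α) * μ x) = (a^(2*γ-2*α) * ‖x‖^(2*α)) * μ x := by ring
          _ ≤ ‖x‖^(2*γ) * μ x := mul_le_mul_of_nonneg_right key (hμ x)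
          _ = q x := by rw [hq_def]
      · rcases lt_or_gt_of_ne hr1 with hc1 | hc1
        · have hm1 : x ∉ s₁ := fun h =>
            absurd (mem_closedBall_zero_iff.mp h) (not_le.mpr hca)
          have hm2 : x ∈ s₂ := ⟨mem_closedBall_zero_iff.mpr hc1.le, hm1⟩
          have hmb : x ∈ closedBall (0:EuclideanSpace ℝ (Fin N)) 1 :=
            mem_closedBall_zero_iff.mpr hc1.le
          simp only [huD1_def, huD2_def]
          rw [Set.indicator_of_notMem hm1, Set.indicator_of_mem hm2,
            Set.indicator_of_mem hmb, zero_add]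
        · have hm1 : x ∉ s₁ := fun h =>
            absurd (mem_closedBall_zero_iff.mp h) (not_le.mpr (by linarith))
          have hm2 : x ∉ s₂ := fun h =>
            absurd (mem_closedBall_zero_iff.mp h.1) (not_le.mpr hc1)
          simp only [huD1_def, huD2_def]
          rw [Set.indicator_of_notMem hm1, Set.indicator_of_notMem hm2, add_zero]
          exact Set.indicator_nonneg (fun y _ =>
            mul_nonneg (Real.rpow_nonneg (norm_nonneg y) _) (hμ y)) x
    have h3 : ∫ x, uD3 x ≤ P := by
      rw [← hu₃_int]
      refine integral_mono_ae hiuD3 hiu₃ ?_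
      refine Eventually.of_forall fun x => ?_
      by_cases hx : x ∈ s₃
      · simp only [huD3_def, hu₃_def]
        rw [Set.indicator_of_mem hx, Set.indicator_of_mem hx]
        obtain ⟨hx1, hx2⟩ := hs₃mem x hx
        refine mul_le_of_le_one_left (hμ x) ?_
        nlinarith
      · simp only [huD3_def, hu₃_def]
        rw [Set.indicator_of_notMem hx, Set.indicator_of_notMem hx]
    have hQint : ∫ x, (closedBall (0:EuclideanSpace ℝ (Fin N)) 1).indicator q x = Q := by
      rw [integral_indicator measurableSet_closedBall]
    linarith
  -- conclusion
  refine ⟨φ, hgrad.mono (fun x h => h.1), hintD, hintB, hintA, hD_pos, ?_⟩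
  intro hle
  have hCD : C * (∫ x, φ x ^ 2 * μ x) ≤ Cp * (Q + P) := by
    calc C * (∫ x, φ x ^ 2 * μ x) ≤ Cp * (∫ x, φ x ^ 2 * μ x) :=
          mul_le_mul_of_nonneg_right (le_max_left C 0) hD_pos.le
      _ ≤ Cp * (Q + P) := mul_le_mul_of_nonneg_left hD_le hCp0
  have hIα : α^2 * (∫ x, u₁ x) ≤ c * (∫ x, u₁ x) :=
    mul_le_mul_of_nonneg_right hαc.le hI0
  have hcA : c * (∫ x, u₁ x) + c * M0 ≤ c * (∫ x, φ x ^ 2 / ‖x‖ ^ 2 * μ x) := by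
    calc c * (∫ x, u₁ x) + c * M0 = c * ((∫ x, u₁ x) + M0) := by ring
      _ ≤ c * (∫ x, φ x ^ 2 / ‖x‖ ^ 2 * μ x) := mul_le_mul_of_nonneg_left hA_ge hc0.le
  have hexp : M0 * (c - γ^2) = c * M0 - γ^2 * M0 := by ring
  linarith [hM0key, hB_eq, hle]
end
end

section
/- Let μ(x) = 2 + sin(log|x|) for 0 < |x| < 1/2 and N ≥ 3. Then |x|^2 U_μ(x) = (1/4)(cos log|x| / (2 + sin log|x|))^2 - (1/2)((N-2)cos log|x| - sin log|x|)/(2 + sin log|x|), and lim sup_{x→0} |x|^2 U_μ(x) > 0; consequently c_{0,μ} := lim inf_{x→0}(c_0(N) - |x|^2 U_μ(x)) < c_0(N). -/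
open MeasureTheory Metric Filter Set

noncomputable section

variable {N : ℕ}

local notation "E" => EuclideanSpace ℝ (Fin N)

/-- auxiliary scalar function -/
def phi (t : ℝ) : ℝ := 2 + Real.sin (Real.log t / 2)

lemma mu_eq_phi (y : E) : 2 + Real.sin (Real.log ‖y‖) = phi (‖y‖ ^ 2) := by
  unfold phi
  rw [Real.log_pow]
  norm_num

lemma hasDerivAt_phi {t : ℝ} (ht : t ≠ 0) :
    HasDerivAt phi (Real.cos (Real.log t / 2) / (2 * t)) t := by
  have h1 : HasDerivAt (fun t => Real.log t / 2) (t⁻¹ / 2) t :=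
    (Real.hasDerivAt_log ht).div_const 2
  have h2 := (Real.hasDerivAt_sin (Real.log t / 2)).comp t h1
  have h3 := h2.const_add 2
  refine h3.congr_deriv (Eq.symm ?_)
  rw [div_eq_mul_inv, mul_inv]
  ring

lemma hasFDerivAt_mu (x : E) (hx : x ≠ 0) :
    HasFDerivAt (fun y : E => 2 + Real.sin (Real.log ‖y‖))
      ((Real.cos (Real.log ‖x‖) / ‖x‖ ^ 2) • (innerSL ℝ x)) x := by
  have hr : ‖x‖ ≠ 0 := norm_ne_zero_iff.mpr hx
  have hq : HasFDerivAt (fun y : E => ‖y‖ ^ 2) (2 • (innerSL ℝ x)) x :=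
    (hasStrictFDerivAt_norm_sq x).hasFDerivAt
  have hphi : HasDerivAt phi (Real.cos (Real.log (‖x‖ ^ 2) / 2) / (2 * ‖x‖ ^ 2)) (‖x‖ ^ 2) :=
    hasDerivAt_phi (by positivity)
  have h := hphi.comp_hasFDerivAt x hq
  have heq : (fun y : E => 2 + Real.sin (Real.log ‖y‖)) = phi ∘ (fun y : E => ‖y‖ ^ 2) := by
    funext y; exact mu_eq_phi y
  rw [heq]
  refine h.congr_fderiv (Eq.symm ?_)
  have hl : Real.log (‖x‖ ^ 2) / 2 = Real.log ‖x‖ := by rw [Real.log_pow]; norm_num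
  rw [hl]
  ext v
  simp only [ContinuousLinearMap.smul_apply, smul_eq_mul, ContinuousLinearMap.coe_smul',
    Pi.smul_apply]
  field_simp
  ring

lemma gradient_mu (x : E) (hx : x ≠ 0) :
    gradient (fun y : E => 2 + Real.sin (Real.log ‖y‖)) x
      = (Real.cos (Real.log ‖x‖) / ‖x‖ ^ 2) • x := by
  have h := hasFDerivAt_mu (N := N) x hx
  have key : (InnerProductSpace.toDual ℝ E) ((Real.cos (Real.log ‖x‖) / ‖x‖ ^ 2) • x)
      = (Real.cos (Real.log ‖x‖) / ‖x‖ ^ 2) • (innerSL ℝ x) := by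
    ext v
    simp [InnerProductSpace.toDual_apply_apply, real_inner_smul_left]
  have hg : HasGradientAt (fun y : E => 2 + Real.sin (Real.log ‖y‖))
      ((Real.cos (Real.log ‖x‖) / ‖x‖ ^ 2) • x) x := by
    rw [hasGradientAt_iff_hasFDerivAt, key]
    exact h
  exact hg.gradient

lemma norm_gradient_mu_sq (x : E) (hx : x ≠ 0) :
    ‖gradient (fun y : E => 2 + Real.sin (Real.log ‖y‖)) x‖ ^ 2
      = Real.cos (Real.log ‖x‖) ^ 2 / ‖x‖ ^ 2 := by
  have hr : (0:ℝ) < ‖x‖ := norm_pos_iff.mpr hx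
  rw [gradient_mu x hx, norm_smul]
  rw [mul_pow, Real.norm_eq_abs, sq_abs]
  rw [div_pow]
  field_simp

def psi (t : ℝ) : ℝ := Real.cos (Real.log t / 2) / t

lemma hasDerivAt_psi {t : ℝ} (ht : t ≠ 0) :
    HasDerivAt psi (-(Real.sin (Real.log t / 2)) / (2 * t ^ 2) - Real.cos (Real.log t / 2) / t ^ 2)
      t := by
  have h1 : HasDerivAt (fun t => Real.log t / 2) (t⁻¹ / 2) t :=
    (Real.hasDerivAt_log ht).div_const 2
  have h2 := (Real.hasDerivAt_cos (Real.log t / 2)).comp t h1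
  have h3 := h2.mul (hasDerivAt_inv ht)
  have heq : psi = (fun t => Real.cos (Real.log t / 2) * t⁻¹) := by
    funext s; simp [psi, div_eq_mul_inv]
  rw [heq]
  refine h3.congr_deriv (Eq.symm ?_)
  simp only [Function.comp_apply]
  field_simp
  ring

lemma psi_norm_sq (y : E) : psi (‖y‖ ^ 2) = Real.cos (Real.log ‖y‖) / ‖y‖ ^ 2 := by
  unfold psi
  rw [Real.log_pow]
  norm_num

lemma fderiv_snd_mu (x : E) (hx : x ≠ 0) (i : Fin N) :
    fderiv ℝ (fun y : E => fderiv ℝ (fun z : E => 2 + Real.sin (Real.log ‖z‖)) y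
        (EuclideanSpace.single i 1)) x (EuclideanSpace.single i 1)
      = psi (‖x‖ ^ 2) + 2 * (-(Real.sin (Real.log (‖x‖ ^ 2) / 2)) / (2 * (‖x‖ ^ 2) ^ 2)
          - Real.cos (Real.log (‖x‖ ^ 2) / 2) / (‖x‖ ^ 2) ^ 2) * (x i) ^ 2 := by
  set G : E → ℝ := fun y => psi (‖y‖ ^ 2) * y i with hG
  have hr : (0:ℝ) < ‖x‖ := norm_pos_iff.mpr hx
  -- eventual equality
  have hev : (fun y : E => fderiv ℝ (fun z : E => 2 + Real.sin (Real.log ‖z‖)) y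
      (EuclideanSpace.single i 1)) =ᶠ[nhds x] G := by
    have hopen : IsOpen {y : E | y ≠ 0} := isOpen_ne
    filter_upwards [hopen.mem_nhds hx] with y hy
    have h := (hasFDerivAt_mu (N := N) y hy).fderiv
    rw [h, hG]
    simp only [ContinuousLinearMap.coe_smul', Pi.smul_apply, innerSL_apply_apply, smul_eq_mul]
    rw [psi_norm_sq]
    have : inner ℝ y (EuclideanSpace.single i (1:ℝ)) = y i := by
      rw [EuclideanSpace.inner_single_right]
      simp
    rw [this]
  rw [hev.fderiv_eq]
  -- derivative of G
  have hq : HasFDerivAt (fun y : E => ‖y‖ ^ 2) (2 • (innerSL ℝ x)) x :=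
    (hasStrictFDerivAt_norm_sq x).hasFDerivAt
  have hpsi := (hasDerivAt_psi (t := ‖x‖ ^ 2) (by positivity)).comp_hasFDerivAt x hq
  have hproj : HasFDerivAt (fun y : E => y i) (EuclideanSpace.proj (𝕜 := ℝ) i) x :=
    (EuclideanSpace.proj (𝕜 := ℝ) i).hasFDerivAt
  have hGd := hpsi.mul hproj
  simp only [Function.comp_def] at hGd
  rw [hG, (show HasFDerivAt (fun y : E => psi (‖y‖ ^ 2) * y i) _ x from hGd).fderiv]
  simp only [ContinuousLinearMap.add_apply, ContinuousLinearMap.coe_smul', Pi.smul_apply,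
    ContinuousLinearMap.smul_apply, innerSL_apply_apply, smul_eq_mul]
  have h1 : (EuclideanSpace.proj (𝕜 := ℝ) i) (EuclideanSpace.single i 1) = 1 := by simp
  have h2 : inner ℝ x (EuclideanSpace.single i (1:ℝ)) = x i := by
    rw [EuclideanSpace.inner_single_right]; simp
  rw [h1, h2]
  ring

lemma norm_sq_eq_sum (x : E) : ‖x‖ ^ 2 = ∑ i, (x i) ^ 2 := by
  rw [EuclideanSpace.norm_eq, Real.sq_sqrt (by positivity)]
  simp [Real.norm_eq_abs, sq_abs]

lemma lap_mu (x : E) (hx : x ≠ 0) :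
    lap (fun y : E => 2 + Real.sin (Real.log ‖y‖)) x
      = (((N : ℝ) - 2) * Real.cos (Real.log ‖x‖) - Real.sin (Real.log ‖x‖)) / ‖x‖ ^ 2 := by
  have hr : (0:ℝ) < ‖x‖ := norm_pos_iff.mpr hx
  have hl : Real.log (‖x‖ ^ 2) / 2 = Real.log ‖x‖ := by rw [Real.log_pow]; norm_num
  unfold lap
  have : ∀ i : Fin N, fderiv ℝ (fun y : E =>
      fderiv ℝ (fun z : E => 2 + Real.sin (Real.log ‖z‖)) y (EuclideanSpace.single i 1)) x
        (EuclideanSpace.single i 1)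
      = psi (‖x‖ ^ 2) + 2 * (-(Real.sin (Real.log (‖x‖ ^ 2) / 2)) / (2 * (‖x‖ ^ 2) ^ 2)
          - Real.cos (Real.log (‖x‖ ^ 2) / 2) / (‖x‖ ^ 2) ^ 2) * (x i) ^ 2 :=
    fun i => fderiv_snd_mu x hx i
  rw [Finset.sum_congr rfl (fun i _ => this i)]
  rw [Finset.sum_add_distrib, Finset.sum_const, ← Finset.mul_sum, ← norm_sq_eq_sum]
  rw [psi_norm_sq, hl]
  simp only [Finset.card_univ, Fintype.card_fin, nsmul_eq_mul]
  field_simp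
  ring

lemma mu_pos (t : ℝ) : (0:ℝ) < 2 + Real.sin t := by
  have := Real.neg_one_le_sin t; linarith

lemma formula_mu (x : E) (hx : x ≠ 0) :
    ‖x‖ ^ 2 * Umu (fun y : E => 2 + Real.sin (Real.log ‖y‖)) x =
      (1 / 4) * (Real.cos (Real.log ‖x‖) / (2 + Real.sin (Real.log ‖x‖))) ^ 2
        - (1 / 2) * (((N : ℝ) - 2) * Real.cos (Real.log ‖x‖) - Real.sin (Real.log ‖x‖))
            / (2 + Real.sin (Real.log ‖x‖)) := by
  have hr : (0:ℝ) < ‖x‖ := norm_pos_iff.mpr hx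
  have hm : (0:ℝ) < 2 + Real.sin (Real.log ‖x‖) := mu_pos _
  unfold Umu
  rw [norm_gradient_mu_sq x hx, lap_mu x hx]
  field_simp

lemma V_le (hN : 3 ≤ N) (θ : ℝ) :
    (1/4) * (Real.cos θ / (2 + Real.sin θ)) ^ 2
      - (1/2) * (((N:ℝ) - 2) * Real.cos θ - Real.sin θ) / (2 + Real.sin θ)
    ≤ 1/4 + ((N:ℝ) - 1)/2 := by
  have hs := Real.neg_one_le_sin θ; have hs' := Real.sin_le_one θ
  have hc := Real.neg_one_le_cos θ; have hc' := Real.cos_le_one θ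
  have hm : (1:ℝ) ≤ 2 + Real.sin θ := by linarith
  have hm0 : (0:ℝ) < 2 + Real.sin θ := by linarith
  have hN' : (1:ℝ) ≤ (N:ℝ) - 2 := by
    have : (3:ℝ) ≤ (N:ℝ) := by exact_mod_cast hN
    linarith
  have h1 : (Real.cos θ / (2 + Real.sin θ)) ^ 2 ≤ 1 := by
    rw [div_pow, div_le_one (by positivity)]
    nlinarith
  have h2 : -(((N:ℝ) - 1)) ≤ (((N:ℝ) - 2) * Real.cos θ - Real.sin θ) / (2 + Real.sin θ) := by
    rw [le_div_iff₀ hm0]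
    nlinarith
  have h3 : (1/2) * ((((N:ℝ) - 2) * Real.cos θ - Real.sin θ) / (2 + Real.sin θ)) ≥ -(((N:ℝ)-1)/2) := by
    linarith
  calc (1/4) * (Real.cos θ / (2 + Real.sin θ)) ^ 2
      - (1/2) * (((N:ℝ) - 2) * Real.cos θ - Real.sin θ) / (2 + Real.sin θ)
      = (1/4) * (Real.cos θ / (2 + Real.sin θ)) ^ 2
        - (1/2) * ((((N:ℝ) - 2) * Real.cos θ - Real.sin θ) / (2 + Real.sin θ)) := by ring
    _ ≤ 1/4 + ((N:ℝ) - 1)/2 := by linarith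


/-- For the oscillating weight `μ(x) = 2 + sin(log|x|)`:
the formula for `|x|² U_μ` holds on the punctured ball `B_{1/2}`,
`lim sup_{x→0} |x|² U_μ(x) > 0`, and consequently
`c_{0,μ} = lim inf_{x→0}(c₀(N) - |x|² U_μ) < c₀(N)`. -/
theorem Umu_oscillating_weight (N : ℕ) (hN : 3 ≤ N) :
    (∀ x : EuclideanSpace ℝ (Fin N), 0 < ‖x‖ → ‖x‖ < 1 / 2 →
      ‖x‖ ^ 2 * Umu (fun y => 2 + Real.sin (Real.log ‖y‖)) x =
        (1 / 4) * (Real.cos (Real.log ‖x‖) / (2 + Real.sin (Real.log ‖x‖))) ^ 2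
          - (1 / 2) * (((N : ℝ) - 2) * Real.cos (Real.log ‖x‖) - Real.sin (Real.log ‖x‖))
              / (2 + Real.sin (Real.log ‖x‖))) ∧
    0 < Filter.limsup (fun x : EuclideanSpace ℝ (Fin N) =>
          ‖x‖ ^ 2 * Umu (fun y => 2 + Real.sin (Real.log ‖y‖)) x)
        (nhdsWithin 0 {0}ᶜ) ∧
    Filter.liminf (fun x : EuclideanSpace ℝ (Fin N) =>
        (((N : ℝ) - 2) / 2) ^ 2 - ‖x‖ ^ 2 * Umu (fun y => 2 + Real.sin (Real.log ‖y‖)) x)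
      (nhdsWithin 0 {0}ᶜ) < (((N : ℝ) - 2) / 2) ^ 2 := by
  set f : EuclideanSpace ℝ (Fin N) → ℝ :=
    fun x => ‖x‖ ^ 2 * Umu (fun y => 2 + Real.sin (Real.log ‖y‖)) x with hf
  set l : Filter (EuclideanSpace ℝ (Fin N)) := nhdsWithin 0 {0}ᶜ with hl
  set C : ℝ := 1/4 + ((N:ℝ) - 1)/2 with hC
  -- upper bound on f near 0
  have hbound : ∀ᶠ x in l, f x ≤ C := by
    filter_upwards [self_mem_nhdsWithin] with x hx
    have hx0 : x ≠ 0 := hx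
    rw [hf]
    simp only
    rw [formula_mu x hx0]
    exact V_le hN _
  -- the sequence
  have hN0 : 0 < N := by omega
  set e₀ : EuclideanSpace ℝ (Fin N) := EuclideanSpace.single (⟨0, hN0⟩ : Fin N) (1:ℝ) with he
  have hne₀ : ‖e₀‖ = 1 := by rw [he, EuclideanSpace.norm_single]; norm_num
  set a : ℕ → ℝ := fun n => Real.pi/2 + ((-(n:ℤ) - 1 : ℤ) : ℝ) * (2 * Real.pi) with ha
  set u : ℕ → EuclideanSpace ℝ (Fin N) := fun n => Real.exp (a n) • e₀ with hu
  have hnorm : ∀ n, ‖u n‖ = Real.exp (a n) := by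
    intro n
    rw [hu]
    simp only [norm_smul, Real.norm_eq_abs, abs_of_pos (Real.exp_pos _), hne₀, mul_one]
  have hune : ∀ n, u n ≠ 0 := by
    intro n
    have : ‖u n‖ ≠ 0 := by rw [hnorm]; exact (Real.exp_pos _).ne'
    exact norm_ne_zero_iff.mp this
  -- f (u n) = 1/6
  have hfu : ∀ n, f (u n) = 1/6 := by
    intro n
    rw [hf]
    simp only
    rw [formula_mu (u n) (hune n), hnorm n, Real.log_exp, ha]
    rw [Real.sin_add_int_mul_two_pi, Real.cos_add_int_mul_two_pi,
      Real.sin_pi_div_two, Real.cos_pi_div_two]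
    norm_num
  -- tendsto
  have htend : Tendsto u atTop l := by
    rw [hl, tendsto_nhdsWithin_iff]
    constructor
    · rw [tendsto_zero_iff_norm_tendsto_zero]
      have h1 : Tendsto a atTop atBot := by
        apply tendsto_atBot_mono (f := fun n : ℕ => -(n:ℝ))
        · intro n
          rw [ha]
          have hπ := Real.pi_gt_three
          push_cast
          nlinarith [Nat.cast_nonneg (α := ℝ) n]
        · exact tendsto_neg_atBot_iff.mpr tendsto_natCast_atTop_atTop
      have := Real.tendsto_exp_atBot.comp h1
      apply this.congr
      intro n
      exact (hnorm n).symm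
    · exact Filter.Eventually.of_forall fun n => hune n
  refine ⟨?_, ?_, ?_⟩
  · intro x hx _
    exact formula_mu x (norm_pos_iff.mp hx)
  · have h16 : (1:ℝ)/6 ≤ Filter.limsup f l := by
      apply Filter.le_limsup_of_frequently_le
      · exact htend.frequently (Filter.Frequently.of_forall fun n => (hfu n).ge)
      · exact ⟨C, Filter.eventually_map.2 hbound⟩
    linarith
  · set c₀ : ℝ := (((N:ℝ) - 2)/2)^2 with hc₀
    have h : Filter.liminf (fun x => c₀ - f x) l ≤ c₀ - 1/6 := by
      apply Filter.liminf_le_of_frequently_le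
      · apply htend.frequently
        apply Filter.Frequently.of_forall
        intro n
        rw [hfu n]
      · refine ⟨c₀ - C, Filter.eventually_map.2 ?_⟩
        filter_upwards [hbound] with x hx
        show c₀ - C ≤ c₀ - f x
        linarith
    linarith

end
end
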